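/- arXiv:1707.09745 — 5 statements merged into one kernel-verified Lean document; each statement's English description precedes it below -/
import Mathlib

section
/- (Vertex-cut Bound) For every connected simple graph G and every vertex cut S of G, if H_1, H_2, …, H_p are the connected components of G − S, then the undirected optical index satisfies w(G) ≥ (Σ_{i<j} |H_i|·|H_j|) / ⌊|[S, V(G)\S]|/2⌋, where [S, V(G)\S] is the set of edges with one endpoint in S and the other outside S. -/
open SimpleGraph

/-- An all-to-all routing in a simple graph `G`: a choice of one path between each
(unordered) pair of vertices. -/
structure Routing {V : Type*} (G : SimpleGraph V) where
  path : ∀ u v : V, G.Walk u v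
  isPath : ∀ u v : V, (path u v).IsPath
  symm : ∀ u v : V, path v u = (path u v).reverse

/-- The conflict graph of a routing: vertices are unordered pairs of distinct vertices of `G`
(i.e. the paths of the routing), two of them adjacent iff the corresponding paths share an
edge. -/
def Routing.conflictGraph {V : Type*} {G : SimpleGraph V} (R : Routing G) :
    SimpleGraph {p : Sym2 V // ¬ p.IsDiag} where
  Adj p q := p ≠ q ∧ ∃ (u v u' v' : V) (e : Sym2 V),
      (p : Sym2 V) = s(u, v) ∧ (q : Sym2 V) = s(u', v') ∧
      e ∈ (R.path u v).edges ∧ e ∈ (R.path u' v').edges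
  symm := by
    constructor
    rintro p q ⟨hne, u, v, u', v', e, hp, hq, h1, h2⟩
    exact ⟨hne.symm, u', v', u, v, e, hq, hp, h2, h1⟩
  loopless := by
    constructor
    rintro p ⟨hne, -⟩
    exact hne rfl

/-- The undirected optical index `w(G)`: the minimum over all all-to-all routings `R`
of the chromatic number of the conflict graph `Q(R)`. -/
noncomputable def opticalIndex {V : Type*} (G : SimpleGraph V) : ℕ :=
  sInf {n | ∃ R : Routing G, R.conflictGraph.Colorable n}

/-- The load of an edge `e` under a routing: the number of paths of the routing
containing `e`. -/
noncomputable def Routing.load {V : Type*} {G : SimpleGraph V} (R : Routing G)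
    (e : Sym2 V) : ℕ :=
  Nat.card {p : {p : Sym2 V // ¬ p.IsDiag} //
    ∃ u v : V, (p : Sym2 V) = s(u, v) ∧ e ∈ (R.path u v).edges}

/-- The edge-forwarding index `π(G)`: the minimum over all all-to-all routings of the
maximum edge load. -/
noncomputable def forwardingIndex {V : Type*} (G : SimpleGraph V) : ℕ :=
  sInf {n | ∃ R : Routing G, ∀ e ∈ G.edgeSet, R.load e ≤ n}

/-- The complete `m`-ary tree of height `h`: vertices are words over `Fin m` of length
at most `h` (the root is the empty word), a vertex being adjacent to its parent. -/
def completeMAryTree (m h : ℕ) : SimpleGraph {l : List (Fin m) // l.length ≤ h} where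
  Adj x y := (∃ a : Fin m, x.val = a :: y.val) ∨ (∃ a : Fin m, y.val = a :: x.val)
  symm := ⟨fun x y hxy => Or.symm hxy⟩
  loopless := by
    constructor
    rintro x (⟨a, ha⟩ | ⟨a, ha⟩) <;> exact List.cons_ne_self a x.val ha.symm

/-- The tree `D_{m,h}`: two disjoint copies of the complete `m`-ary tree of height `h-1`
with an edge joining the two roots. -/
def doubleMAryTree (m h : ℕ) :
    SimpleGraph (Bool × {l : List (Fin m) // l.length ≤ h - 1}) where
  Adj x y := (x.1 = y.1 ∧ ((∃ a : Fin m, x.2.val = a :: y.2.val) ∨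
      (∃ a : Fin m, y.2.val = a :: x.2.val)))
    ∨ (x.1 ≠ y.1 ∧ x.2.val = [] ∧ y.2.val = [])
  symm := by
    constructor
    rintro x y (⟨hb, hxy⟩ | ⟨hb, h1, h2⟩)
    · exact Or.inl ⟨hb.symm, Or.symm hxy⟩
    · exact Or.inr ⟨hb.symm, h2, h1⟩
  loopless := by
    constructor
    rintro x (⟨-, (⟨a, ha⟩ | ⟨a, ha⟩)⟩ | ⟨hb, -⟩)
    · exact List.cons_ne_self a _ ha.symm
    · exact List.cons_ne_self a _ ha.symm
    · exact hb rfl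

noncomputable def mkRouting {V : Type*} (G : SimpleGraph V) (hG : G.Connected) :
    Routing G := by
  letI : LinearOrder V := IsWellOrder.linearOrder WellOrderingRel
  let P : ∀ u v : V, G.Path u v := fun u v => ((hG.preconnected u v).some).toPath
  refine ⟨fun u v => if u ≤ v then (P u v).val else (P v u).val.reverse, ?_, ?_⟩
  · intro u v
    split
    · exact (P u v).prop
    · exact ((P v u).prop).reverse
  · intro u v
    rcases lt_trichotomy u v with h | h | h
    · rw [if_pos h.le, if_neg (not_le.mpr h)]
    · subst h
      rw [if_pos le_rfl]
      have : (P u u).val = SimpleGraph.Walk.nil :=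
        SimpleGraph.Walk.isPath_iff_eq_nil.mp (P u u).prop
      rw [this]
      rfl
    · rw [if_pos h.le, if_neg (not_le.mpr h), SimpleGraph.Walk.reverse_reverse]

private lemma cut_count_one {V : Type*} [DecidableEq V] {G : SimpleGraph V} {S : Set V}
    (F : Finset (Sym2 V))
    (hF : ∀ u v : V, G.Adj u v → u ∈ S → v ∉ S → s(u, v) ∈ F) :
    ∀ {x y : V} (w : G.Walk x y), x ∈ S → y ∉ S →
      1 ≤ w.edges.countP (fun e => e ∈ F) := by
  intro x y w
  induction w with
  | nil => intro hx hy; exact absurd hx hy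
  | @cons a b c h w ih =>
    intro hx hy
    rw [SimpleGraph.Walk.edges_cons, List.countP_cons]
    by_cases hb : b ∈ S
    · exact le_trans (ih hb hy) (Nat.le_add_right _ _)
    · have hmem : s(a, b) ∈ F := hF a b h hx hb
      simp [hmem]

private lemma cut_count_two {V : Type*} [DecidableEq V] {G : SimpleGraph V} {S : Set V}
    (F : Finset (Sym2 V))
    (hF : ∀ u v : V, G.Adj u v → u ∈ S → v ∉ S → s(u, v) ∈ F) :
    ∀ {x y : V} (w : G.Walk x y) (hx : x ∈ Sᶜ) (hy : y ∈ Sᶜ),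
      (G.induce Sᶜ).connectedComponentMk ⟨x, hx⟩ ≠
        (G.induce Sᶜ).connectedComponentMk ⟨y, hy⟩ →
      2 ≤ w.edges.countP (fun e => e ∈ F) := by
  intro x y w
  induction w with
  | nil => intro hx hy hne; exact absurd rfl hne
  | @cons a b c h w ih =>
    intro hx hy hne
    rw [SimpleGraph.Walk.edges_cons, List.countP_cons]
    by_cases hb : b ∈ S
    · have h1 : s(a, b) ∈ F := by rw [Sym2.eq_swap]; exact hF b a h.symm hb hx
      have h2 := cut_count_one F hF w hb hy
      simp only [h1, decide_eq_true_eq, if_pos, decide_true]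
      omega
    · have hadj : (G.induce Sᶜ).Adj ⟨a, hx⟩ ⟨b, hb⟩ := h
      have heq : (G.induce Sᶜ).connectedComponentMk ⟨a, hx⟩ =
          (G.induce Sᶜ).connectedComponentMk ⟨b, hb⟩ :=
        SimpleGraph.ConnectedComponent.connectedComponentMk_eq_of_adj hadj
      exact le_trans (ih hb hy (fun hbc => hne (heq.trans hbc))) (Nat.le_add_right _ _)

set_option maxHeartbeats 2000000 in
/-- Vertex-cut Bound: for every connected simple graph `G` and every vertex
cut `S` (a set whose removal leaves more than one connected component),
`w(G) ≥ (∑_{i<j} |H_i|·|H_j|) / ⌊|[S, V(G)\\S]|/2⌋`, where the `H_i` are the connected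
components of `G − S`.  The sum `∑_{i<j} |H_i|·|H_j|` is expressed as half the number of
ordered pairs of vertices of `G − S` lying in distinct components. -/

theorem vertex_cut_bound {V : Type*} [Fintype V] (G : SimpleGraph V) (hG : G.Connected)
    (S : Set V)
    (hcut : 1 < Nat.card (G.induce Sᶜ).ConnectedComponent) :
    ((Nat.card {p : ↥Sᶜ × ↥Sᶜ |
          (G.induce Sᶜ).connectedComponentMk p.1 ≠ (G.induce Sᶜ).connectedComponentMk p.2} : ℝ)
        / 2) /
      ((Nat.card {e : Sym2 V | e ∈ G.edgeSet ∧ ∃ u v : V, e = s(u, v) ∧ u ∈ S ∧ v ∉ S} / 2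
          : ℕ) : ℝ)
      ≤ (opticalIndex G : ℝ) := by
  classical
  haveI : Fintype ↥Sᶜ := Fintype.ofFinite _
  haveI : Fintype (Sym2 V) := Fintype.ofFinite _
  haveI : Fintype {p : Sym2 V // ¬ p.IsDiag} := Fintype.ofFinite _
  set n := opticalIndex G with hn
  set Gi := G.induce Sᶜ with hGi
  set κ : ↥Sᶜ → Gi.ConnectedComponent := Gi.connectedComponentMk with hκ
  -- the cut edge finset
  set F : Finset (Sym2 V) := Finset.univ.filter
    (fun e => e ∈ G.edgeSet ∧ ∃ u v : V, e = s(u, v) ∧ u ∈ S ∧ v ∉ S) with hFdef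
  have hFmem : ∀ u v : V, G.Adj u v → u ∈ S → v ∉ S → s(u, v) ∈ F := by
    intro u v h hu hv
    simp only [hFdef, Finset.mem_filter, Finset.mem_univ, true_and]
    exact ⟨h, u, v, rfl, hu, hv⟩
  -- the optical index is attained
  have hnonempty : {m | ∃ R : Routing G, R.conflictGraph.Colorable m}.Nonempty :=
    ⟨Fintype.card {p : Sym2 V // ¬ p.IsDiag}, mkRouting G hG,
      SimpleGraph.colorable_of_fintype _⟩
  obtain ⟨R, hcol⟩ : ∃ R : Routing G, R.conflictGraph.Colorable n := Nat.sInf_mem hnonempty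
  obtain ⟨C⟩ := hcol
  -- cross pairs
  set X : Finset {p : Sym2 V // ¬ p.IsDiag} := Finset.univ.filter
    (fun p => ∃ (a b : V) (ha : a ∈ Sᶜ) (hb : b ∈ Sᶜ),
      (p : Sym2 V) = s(a, b) ∧ κ ⟨a, ha⟩ ≠ κ ⟨b, hb⟩) with hXdef
  -- choice of a representation for each cross pair
  have hrep : ∀ p : {p : Sym2 V // ¬ p.IsDiag}, ∃ ab : V × V, p ∈ X →
      ((p : Sym2 V) = s(ab.1, ab.2) ∧ ∃ (ha : ab.1 ∈ Sᶜ) (hb : ab.2 ∈ Sᶜ),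
        κ ⟨ab.1, ha⟩ ≠ κ ⟨ab.2, hb⟩) := by
    intro p
    by_cases hp : p ∈ X
    · rw [hXdef, Finset.mem_filter] at hp
      obtain ⟨a, b, ha, hb, h1, h2⟩ := hp.2
      exact ⟨(a, b), fun _ => ⟨h1, ha, hb, h2⟩⟩
    · exact ⟨Quot.out (p : Sym2 V), fun hp' => absurd hp' hp⟩
  choose ab hab using hrep
  -- the finset of cut edges used by the path of a cross pair
  set E : {p : Sym2 V // ¬ p.IsDiag} → Finset (Sym2 V) :=
    fun p => ((R.path (ab p).1 (ab p).2).edges.filter (fun e => e ∈ F)).toFinset with hEdef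
  have hEmem : ∀ p e, e ∈ E p ↔
      (e ∈ (R.path (ab p).1 (ab p).2).edges ∧ e ∈ F) := by
    intro p e
    simp [hEdef]
  have hE2 : ∀ p ∈ X, 2 ≤ (E p).card := by
    intro p hp
    obtain ⟨h1, ha, hb, h2⟩ := hab p hp
    have hnodup : ((R.path (ab p).1 (ab p).2).edges.filter (fun e => e ∈ F)).Nodup :=
      (R.isPath _ _).edges_nodup.filter _
    rw [hEdef]
    rw [List.toFinset_card_of_nodup hnodup, ← List.countP_eq_length_filter]
    exact cut_count_two F hFmem (R.path (ab p).1 (ab p).2) ha hb h2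
  have hEsub : ∀ p, E p ⊆ F := by
    intro p e he
    exact ((hEmem p e).mp he).2
  -- same-colored cross pairs have disjoint cut-edge sets
  have hEdisj : ∀ p ∈ X, ∀ q ∈ X, p ≠ q → C p = C q → Disjoint (E p) (E q) := by
    intro p hp q hq hne hc
    rw [Finset.disjoint_left]
    intro e hep heq
    have h1 := (hEmem p e).mp hep
    have h2 := (hEmem q e).mp heq
    have hadj : R.conflictGraph.Adj p q :=
      ⟨hne, (ab p).1, (ab p).2, (ab q).1, (ab q).2, e,
        (hab p hp).1, (hab q hq).1, h1.1, h2.1⟩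
    exact C.valid hadj hc
  -- each color class contains at most F.card / 2 cross pairs
  have hfiber : ∀ i ∈ X.image C, (X.filter (fun p => C p = i)).card ≤ F.card / 2 := by
    intro i _
    set Fi := X.filter (fun p => C p = i) with hFi
    have hdisj : ∀ p ∈ Fi, ∀ q ∈ Fi, p ≠ q → Disjoint (E p) (E q) := by
      intro p hp q hq hne
      rw [hFi, Finset.mem_filter] at hp hq
      exact hEdisj p hp.1 q hq.1 hne (hp.2.trans hq.2.symm)
    have hsum : ∑ p ∈ Fi, (E p).card = (Fi.biUnion E).card :=
      (Finset.card_biUnion hdisj).symm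
    have hsub : Fi.biUnion E ⊆ F := by
      intro e he
      obtain ⟨p, _, hpe⟩ := Finset.mem_biUnion.mp he
      exact hEsub p hpe
    have h1 : Fi.card * 2 ≤ ∑ p ∈ Fi, (E p).card := by
      have := Finset.card_nsmul_le_sum Fi (fun p => (E p).card) 2
        (fun p hp => hE2 p (Finset.mem_filter.mp hp).1)
      simpa [smul_eq_mul] using this
    have h2 : Fi.card * 2 ≤ F.card :=
      h1.trans (hsum.le.trans (Finset.card_le_card hsub))
    exact (Nat.le_div_iff_mul_le (by norm_num)).mpr h2
  -- total number of cross pairs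
  have hXcard : X.card ≤ (F.card / 2) * n := by
    calc X.card ≤ (F.card / 2) * (X.image C).card :=
          Finset.card_le_mul_card_image X (F.card / 2) hfiber
      _ ≤ (F.card / 2) * n := by
          refine Nat.mul_le_mul_left _ ?_
          calc (X.image C).card ≤ Fintype.card (Fin n) :=
                Finset.card_le_card (Finset.subset_univ _)
            _ = n := Fintype.card_fin n
  -- ordered pairs
  set O : Finset (↥Sᶜ × ↥Sᶜ) := Finset.univ.filter (fun p => κ p.1 ≠ κ p.2) with hOdef
  set φ : ↥Sᶜ × ↥Sᶜ → Sym2 V := fun q => s((q.1 : V), (q.2 : V)) with hφdef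
  have hO2X : O.card ≤ 2 * X.card := by
    have hfib : ∀ e ∈ O.image φ, (O.filter (fun q => φ q = e)).card ≤ 2 := by
      intro e he
      obtain ⟨q₀, _, hq₀⟩ := Finset.mem_image.mp he
      have hsub : O.filter (fun q => φ q = e) ⊆ {q₀, (q₀.2, q₀.1)} := by
        intro q hq
        obtain ⟨_, hqe⟩ := Finset.mem_filter.mp hq
        have : φ q = φ q₀ := hqe.trans hq₀.symm
        rw [hφdef] at this
        rcases Sym2.eq_iff.mp this with ⟨h1, h2⟩ | ⟨h1, h2⟩
        · have : q = q₀ := Prod.ext (Subtype.ext h1) (Subtype.ext h2)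
          simp [this]
        · have : q = (q₀.2, q₀.1) := Prod.ext (Subtype.ext h1) (Subtype.ext h2)
          simp [this]
      calc (O.filter (fun q => φ q = e)).card ≤ ({q₀, (q₀.2, q₀.1)} : Finset _).card :=
            Finset.card_le_card hsub
        _ ≤ 2 := (Finset.card_insert_le _ _).trans (by simp)
    have himg : O.image φ ⊆ X.image Subtype.val := by
      intro e he
      obtain ⟨q, hq, hqe⟩ := Finset.mem_image.mp he
      rw [hOdef, Finset.mem_filter] at hq
      have hql : (q.1 : V) ≠ (q.2 : V) := by
        intro hh
        exact hq.2 (by rw [Subtype.ext hh])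
      have hdiag : ¬ (s((q.1 : V), (q.2 : V)) : Sym2 V).IsDiag := by
        rw [Sym2.mk_isDiag_iff]
        exact hql
      refine Finset.mem_image.mpr ⟨⟨s((q.1 : V), (q.2 : V)), hdiag⟩, ?_, ?_⟩
      · rw [hXdef, Finset.mem_filter]
        exact ⟨Finset.mem_univ _, (q.1 : V), (q.2 : V), q.1.prop, q.2.prop, rfl, hq.2⟩
      · rw [← hqe, hφdef]
    calc O.card ≤ 2 * (O.image φ).card := Finset.card_le_mul_card_image O 2 hfib
      _ ≤ 2 * (X.image Subtype.val).card :=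
          Nat.mul_le_mul_left _ (Finset.card_le_card himg)
      _ = 2 * X.card := by rw [Finset.card_image_of_injective X Subtype.val_injective]
  have total : O.card ≤ 2 * ((F.card / 2) * n) :=
    hO2X.trans (Nat.mul_le_mul_left _ hXcard)
  -- identify the Nat.card expressions
  have h1 : Nat.card {p : ↥Sᶜ × ↥Sᶜ | κ p.1 ≠ κ p.2} = O.card := by
    rw [hOdef, Nat.card_eq_card_toFinset, Set.toFinset_setOf]
  have h2 : Nat.card {e : Sym2 V | e ∈ G.edgeSet ∧ ∃ u v : V, e = s(u, v) ∧ u ∈ S ∧ v ∉ S}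
      = F.card := by
    rw [hFdef, Nat.card_eq_card_toFinset, Set.toFinset_setOf]
  rw [h1, h2]
  rcases Nat.eq_zero_or_pos (F.card / 2) with h0 | hpos
  · rw [h0]
    simp only [Nat.cast_zero, div_zero]
    positivity
  · have hDpos : (0 : ℝ) < ((F.card / 2 : ℕ) : ℝ) := by exact_mod_cast hpos
    rw [div_div, div_le_iff₀ (by linarith)]
    have : (O.card : ℝ) ≤ 2 * (((F.card / 2 : ℕ) : ℝ) * n) := by exact_mod_cast total
    linarith [this]
end

section
/- The undirected optical index of the complete binary tree of height 1 (the star with 3 vertices, i.e. the path with 3 vertices) equals 2, and the undirected optical index of the complete binary tree of height 2 equals 12. -/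
open SimpleGraph

abbrev VV (h : ℕ) := {l : List (Fin 2) // l.length ≤ h}

def toRoot {h : ℕ} : (l : List (Fin 2)) → (hl : l.length ≤ h) →
    (completeMAryTree 2 h).Walk ⟨l, hl⟩ ⟨[], Nat.zero_le h⟩
  | [], _ => SimpleGraph.Walk.nil
  | a :: t, hl => SimpleGraph.Walk.cons (Or.inl ⟨a, rfl⟩) (toRoot t (Nat.le_of_succ_le hl))

def enc {h : ℕ} (x : VV h) : ℕ := x.val.foldr (fun a n => 2 * n + a.val + 1) 0

def base {h : ℕ} (u v : VV h) : (completeMAryTree 2 h).Walk u v :=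
  ((toRoot u.1 u.2).append (toRoot v.1 v.2).reverse).bypass

def rpath {h : ℕ} (u v : VV h) : (completeMAryTree 2 h).Walk u v :=
  if huv : u = v then huv ▸ SimpleGraph.Walk.nil
  else if enc u < enc v then base u v else (base v u).reverse

lemma rpath_isPath {h : ℕ} (u v : VV h) : (rpath u v).IsPath := by
  unfold rpath
  split
  · subst ‹u = v›; simp
  · split
    · exact SimpleGraph.Walk.bypass_isPath _
    · exact (SimpleGraph.Walk.bypass_isPath _).reverse

lemma rpath_symm {h : ℕ} (hinj : ∀ a b : VV h, enc a = enc b → a = b) (u v : VV h) :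
    rpath v u = (rpath u v).reverse := by
  by_cases huv : u = v
  · subst huv; simp [rpath]
  · rw [rpath, rpath, dif_neg huv, dif_neg (Ne.symm huv)]
    rcases Nat.lt_trichotomy (enc u) (enc v) with hlt | heq | hgt
    · rw [if_pos hlt, if_neg (Nat.lt_asymm hlt)]
    · exact absurd (hinj _ _ heq) huv
    · rw [if_pos hgt, if_neg (Nat.lt_asymm hgt), SimpleGraph.Walk.reverse_reverse]

def elemsV2 : Finset (VV 2) := {⟨[], by decide⟩, ⟨[0], by decide⟩, ⟨[1], by decide⟩,
  ⟨[0,0], by decide⟩, ⟨[1,0], by decide⟩, ⟨[0,1], by decide⟩, ⟨[1,1], by decide⟩}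

instance fintypeVV2 : Fintype (VV 2) where
  elems := elemsV2
  complete := by
    rintro ⟨(_ | ⟨a, (_ | ⟨b, (_ | ⟨c, t⟩)⟩)⟩), hl⟩
    · simp [elemsV2]
    · fin_cases a <;> simp [elemsV2]
    · fin_cases a <;> fin_cases b <;> simp [elemsV2]
    · simp at hl

def elemsV1 : Finset (VV 1) := {⟨[], by decide⟩, ⟨[0], by decide⟩, ⟨[1], by decide⟩}

instance fintypeVV1 : Fintype (VV 1) where
  elems := elemsV1
  complete := by
    rintro ⟨(_ | ⟨a, (_ | ⟨b, t⟩)⟩), hl⟩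
    · simp [elemsV1]
    · fin_cases a <;> simp [elemsV1]
    · simp at hl

lemma enc_inj2 : ∀ a b : VV 2, enc a = enc b → a = b := by decide
lemma enc_inj1 : ∀ a b : VV 1, enc a = enc b → a = b := by decide

def R2 : Routing (completeMAryTree 2 2) := ⟨rpath, rpath_isPath, rpath_symm enc_inj2⟩
def R1 : Routing (completeMAryTree 2 1) := ⟨rpath, rpath_isPath, rpath_symm enc_inj1⟩

-- quick sanity: compute an edges list
example : (R2.path ⟨[0,0], by decide⟩ ⟨[1,0], by decide⟩).edges =
    [s((⟨[0,0], by decide⟩ : VV 2), ⟨[0], by decide⟩), s((⟨[0], by decide⟩ : VV 2), ⟨[1,0], by decide⟩)] := by decide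

def ctab : ℕ → ℕ → Fin 12
  | 0, 1 => 11 | 0, 2 => 11 | 0, 3 => 9 | 0, 4 => 10 | 0, 5 => 9 | 0, 6 => 10
  | 1, 2 => 8 | 1, 3 => 2 | 1, 4 => 0 | 1, 5 => 4 | 1, 6 => 5
  | 2, 3 => 6 | 2, 4 => 7 | 2, 5 => 1 | 2, 6 => 0
  | 3, 4 => 4 | 3, 5 => 0 | 3, 6 => 1
  | 4, 5 => 2 | 4, 6 => 3
  | 5, 6 => 6
  | _, _ => 0

def cfun2 (u v : VV 2) : Fin 12 := ctab (min (enc u) (enc v)) (max (enc u) (enc v))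

lemma cfun2_symm (u v : VV 2) : cfun2 u v = cfun2 v u := by
  simp [cfun2, Nat.min_comm, Nat.max_comm]

lemma key2 : ∀ u v u' v' : VV 2,
    ((R2.path u v).edges.inter (R2.path u' v').edges) ≠ [] →
    s(u, v) = s(u', v') ∨ cfun2 u v ≠ cfun2 u' v' := by decide

lemma crossing {h : ℕ} (h1 : 1 ≤ h) {x y : VV h} (w : (completeMAryTree 2 h).Walk x y)
    (hx : x.val.getLast? = some 0) (hy : ¬ (y.val.getLast? = some 0)) :
    s((⟨[0], h1⟩ : VV h), (⟨[], Nat.zero_le h⟩ : VV h)) ∈ w.edges := by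
  induction w with
  | nil => exact absurd hx hy
  | @cons x z y adj w ih =>
    rw [SimpleGraph.Walk.edges_cons]
    by_cases hz : z.val.getLast? = some 0
    · exact List.mem_cons_of_mem _ (ih hz hy)
    · have hedge : s(x, z) = s((⟨[0], h1⟩ : VV h), (⟨[], Nat.zero_le h⟩ : VV h)) := by
        rcases adj with ⟨a, hxa⟩ | ⟨a, hza⟩
        · rcases hzv : z.val with _ | ⟨b, t⟩
          · rw [hzv] at hxa
            rw [hxa] at hx
            simp only [List.getLast?_singleton, Option.some.injEq] at hx
            have hx' : x = ⟨[0], h1⟩ := Subtype.ext (by rw [hxa, hx])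
            have hz' : z = ⟨[], Nat.zero_le h⟩ := Subtype.ext hzv
            rw [hx', hz']
          · exfalso
            apply hz
            rw [← hx, hxa, hzv, List.getLast?_cons_cons]
        · exfalso
          rcases hxv : x.val with _ | ⟨b, t⟩
          · rw [hxv] at hx; simp at hx
          · apply hz
            rw [hza, hxv, List.getLast?_cons_cons, ← hxv, hx]
      rw [hedge]
      exact List.mem_cons_self

lemma lower_bound {h n k : ℕ} (h1 : 1 ≤ h) (R : Routing (completeMAryTree 2 h))
    (C : R.conflictGraph.Coloring (Fin n))
    (s : Finset {p : Sym2 (VV h) // ¬ p.IsDiag}) (hcard : s.card = k)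
    (hs : ∀ p ∈ s, ∃ x y : VV h, (p : Sym2 (VV h)) = s(x, y) ∧
      x.val.getLast? = some 0 ∧ ¬ (y.val.getLast? = some 0)) : k ≤ n := by
  have hinj : Set.InjOn C ↑s := by
    intro p hp q hq hCpq
    by_contra hne
    obtain ⟨x, y, hp', hx, hy⟩ := hs p hp
    obtain ⟨x', y', hq', hx', hy'⟩ := hs q hq
    exact C.valid ⟨hne, x, y, x', y', _, hp', hq',
      crossing h1 (R.path x y) hx hy, crossing h1 (R.path x' y') hx' hy'⟩ hCpq
  calc k = s.card := hcard.symm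
    _ ≤ (Finset.univ : Finset (Fin n)).card :=
        Finset.card_le_card_of_injOn C (fun _ _ => Finset.mem_univ _) hinj
    _ = n := by simp

def S12 : Finset {p : Sym2 (VV 2) // ¬ p.IsDiag} :=
  {⟨s((⟨[0], by decide⟩ : VV 2), ⟨[], by decide⟩), by decide⟩,
   ⟨s((⟨[0], by decide⟩ : VV 2), ⟨[1], by decide⟩), by decide⟩,
   ⟨s((⟨[0], by decide⟩ : VV 2), ⟨[0,1], by decide⟩), by decide⟩,
   ⟨s((⟨[0], by decide⟩ : VV 2), ⟨[1,1], by decide⟩), by decide⟩,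
   ⟨s((⟨[0,0], by decide⟩ : VV 2), ⟨[], by decide⟩), by decide⟩,
   ⟨s((⟨[0,0], by decide⟩ : VV 2), ⟨[1], by decide⟩), by decide⟩,
   ⟨s((⟨[0,0], by decide⟩ : VV 2), ⟨[0,1], by decide⟩), by decide⟩,
   ⟨s((⟨[0,0], by decide⟩ : VV 2), ⟨[1,1], by decide⟩), by decide⟩,
   ⟨s((⟨[1,0], by decide⟩ : VV 2), ⟨[], by decide⟩), by decide⟩,
   ⟨s((⟨[1,0], by decide⟩ : VV 2), ⟨[1], by decide⟩), by decide⟩,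
   ⟨s((⟨[1,0], by decide⟩ : VV 2), ⟨[0,1], by decide⟩), by decide⟩,
   ⟨s((⟨[1,0], by decide⟩ : VV 2), ⟨[1,1], by decide⟩), by decide⟩}

def S2set : Finset {p : Sym2 (VV 1) // ¬ p.IsDiag} :=
  {⟨s((⟨[0], by decide⟩ : VV 1), ⟨[], by decide⟩), by decide⟩,
   ⟨s((⟨[0], by decide⟩ : VV 1), ⟨[1], by decide⟩), by decide⟩}

lemma C2valid : ∀ {p q}, R2.conflictGraph.Adj p q →
    (Sym2.lift ⟨cfun2, cfun2_symm⟩ p.val) ≠ (Sym2.lift ⟨cfun2, cfun2_symm⟩ q.val) := by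
  rintro p q ⟨hne, u, v, u', v', e, hp, hq, h1, h2⟩
  rw [hp, hq, Sym2.lift_mk, Sym2.lift_mk]
  rcases key2 u v u' v' (List.ne_nil_of_mem (List.mem_inter_iff.mpr ⟨h1, h2⟩)) with heq | hne'
  · exact absurd (Subtype.ext (hp.trans (heq.trans hq.symm))) hne
  · exact hne'

def Col2 : R2.conflictGraph.Coloring (Fin 12) := SimpleGraph.Coloring.mk _ C2valid

def ctab1 : ℕ → ℕ → Fin 2
  | 0, 1 => 0 | 0, 2 => 0 | 1, 2 => 1 | _, _ => 0

def cfun1 (u v : VV 1) : Fin 2 := ctab1 (min (enc u) (enc v)) (max (enc u) (enc v))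

lemma cfun1_symm (u v : VV 1) : cfun1 u v = cfun1 v u := by
  simp [cfun1, Nat.min_comm, Nat.max_comm]

lemma key1 : ∀ u v u' v' : VV 1,
    ((R1.path u v).edges.inter (R1.path u' v').edges) ≠ [] →
    s(u, v) = s(u', v') ∨ cfun1 u v ≠ cfun1 u' v' := by decide

lemma C1valid : ∀ {p q}, R1.conflictGraph.Adj p q →
    (Sym2.lift ⟨cfun1, cfun1_symm⟩ p.val) ≠ (Sym2.lift ⟨cfun1, cfun1_symm⟩ q.val) := by
  rintro p q ⟨hne, u, v, u', v', e, hp, hq, h1, h2⟩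
  rw [hp, hq, Sym2.lift_mk, Sym2.lift_mk]
  rcases key1 u v u' v' (List.ne_nil_of_mem (List.mem_inter_iff.mpr ⟨h1, h2⟩)) with heq | hne'
  · exact absurd (Subtype.ext (hp.trans (heq.trans hq.symm))) hne
  · exact hne'

def Col1 : R1.conflictGraph.Coloring (Fin 2) := SimpleGraph.Coloring.mk _ C1valid


/-- the undirected optical index of the complete binary tree of height 1
equals 2, and that of the complete binary tree of height 2 equals 12. -/
theorem opticalIndex_binaryTree_height_one_two :
    opticalIndex (completeMAryTree 2 1) = 2 ∧ opticalIndex (completeMAryTree 2 2) = 12 := by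
  constructor
  · apply le_antisymm
    · exact Nat.sInf_le ⟨R1, ⟨Col1⟩⟩
    · refine le_csInf ⟨2, R1, ⟨Col1⟩⟩ ?_
      rintro n ⟨R, ⟨C⟩⟩
      exact lower_bound (by norm_num) R C S2set (by decide) (by decide)
  · apply le_antisymm
    · exact Nat.sInf_le ⟨R2, ⟨Col2⟩⟩
    · refine le_csInf ⟨12, R2, ⟨Col2⟩⟩ ?_
      rintro n ⟨R, ⟨C⟩⟩
      exact lower_bound (by norm_num) R C S12 (by decide) (by decide)
end

section
/- For every odd integer m ≥ 3 and every positive integer h, the undirected optical index of the complete m-ary tree of height h equals m·(1 + m + m^2 + … + m^{h−1})^2. -/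
open SimpleGraph

namespace MAry
variable {α : Type*} [DecidableEq α]

/-- longest common prefix -/
def lcp : List α → List α → List α
  | a :: as, b :: bs => if a = b then a :: lcp as bs else []
  | _, _ => []

lemma lcp_prefix_left : ∀ x y : List α, lcp x y <+: x
  | [], y => by simp [lcp]
  | a :: as, [] => by simp [lcp]
  | a :: as, b :: bs => by
      rw [lcp]
      split
      · exact List.cons_prefix_cons.mpr ⟨rfl, lcp_prefix_left as bs⟩
      · simp

lemma lcp_prefix_right : ∀ x y : List α, lcp x y <+: y
  | [], y => by simp [lcp]
  | a :: as, [] => by simp [lcp]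
  | a :: as, b :: bs => by
      rw [lcp]
      split
      · subst ‹a = b›; exact List.cons_prefix_cons.mpr ⟨rfl, lcp_prefix_right as bs⟩
      · simp

lemma lcp_max : ∀ x y z : List α, z <+: x → z <+: y → z <+: lcp x y
  | x, y, [] , _, _ => by simp
  | [], y, c :: cs, hx, hy => by simp at hx
  | a :: as, [], c :: cs, hx, hy => by simp at hy
  | a :: as, b :: bs, c :: cs, hx, hy => by
      rw [List.cons_prefix_cons] at hx hy
      obtain ⟨rfl, hx⟩ := hx
      obtain ⟨rfl, hy⟩ := hy
      rw [lcp, if_pos rfl]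
      exact List.cons_prefix_cons.mpr ⟨rfl, lcp_max as bs cs hx hy⟩

def lcs (x y : List α) : List α := (lcp x.reverse y.reverse).reverse

lemma lcs_suffix_left (x y : List α) : lcs x y <:+ x := by
  have := lcp_prefix_left x.reverse y.reverse
  rwa [← List.reverse_suffix, List.reverse_reverse] at this

lemma lcs_suffix_right (x y : List α) : lcs x y <:+ y := by
  have := lcp_prefix_right x.reverse y.reverse
  rwa [← List.reverse_suffix, List.reverse_reverse] at this

lemma lcs_max {x y z : List α} (hx : z <:+ x) (hy : z <:+ y) : z <:+ lcs x y := by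
  rw [← List.reverse_prefix] at hx hy
  have := lcp_max _ _ _ hx hy
  rwa [← List.reverse_suffix, List.reverse_reverse] at this

end MAry

namespace MAry
variable {m h : ℕ}

abbrev V (m h : ℕ) := {l : List (Fin m) // l.length ≤ h}

def upWalkAux (m h : ℕ) : (t w : List (Fin m)) → (hl : (t ++ w).length ≤ h) →
    (completeMAryTree m h).Walk ⟨t ++ w, hl⟩ ⟨w, le_trans (by simp) hl⟩
  | [], _, _ => Walk.nil
  | a :: t, w, hl =>
    have hl' : (t ++ w).length ≤ h := by
      simp only [List.length_append, List.length_cons] at hl ⊢; omega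
    Walk.cons
      (show (completeMAryTree m h).Adj ⟨(a :: t) ++ w, hl⟩ ⟨t ++ w, hl'⟩ from Or.inl ⟨a, rfl⟩)
      (upWalkAux m h t w hl')

lemma mem_support_upWalkAux : ∀ (t w : List (Fin m)) (hl : (t ++ w).length ≤ h) (z : V m h),
    z ∈ (upWalkAux m h t w hl).support ↔ (w <:+ z.val ∧ z.val <:+ t ++ w)
  | [], w, hl, z => by
      simp only [upWalkAux, Walk.support_nil, List.mem_singleton]
      constructor
      · rintro rfl; simp
      · rintro ⟨h1, h2⟩
        exact Subtype.ext (by simpa using (h1.eq_of_length_le (by simpa using h2.length_le)).symm)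
  | a :: t, w, hl, z => by
      simp only [upWalkAux, Walk.support_cons, List.mem_cons,
        mem_support_upWalkAux t w _ z]
      constructor
      · rintro (rfl | ⟨h1, h2⟩)
        · exact ⟨(List.suffix_append _ _).trans (List.suffix_cons _ _), List.suffix_rfl⟩
        · exact ⟨h1, h2.trans ((t ++ w).suffix_cons a)⟩
      · rintro ⟨h1, h2⟩
        rcases List.suffix_cons_iff.mp h2 with h2 | h2
        · exact Or.inl (Subtype.ext h2)
        · exact Or.inr ⟨h1, h2⟩

lemma nodup_support_upWalkAux : ∀ (t w : List (Fin m)) (hl : (t ++ w).length ≤ h),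
    (upWalkAux m h t w hl).support.Nodup
  | [], w, hl => by simp [upWalkAux]
  | a :: t, w, hl => by
      simp only [upWalkAux, Walk.support_cons, List.nodup_cons]
      refine ⟨fun hmem => ?_, nodup_support_upWalkAux t w _⟩
      rw [mem_support_upWalkAux] at hmem
      have := hmem.2.length_le
      simp only [List.length_cons, List.length_append] at this
      omega

lemma edges_upWalkAux : ∀ (t w : List (Fin m)) (hl : (t ++ w).length ≤ h)
    (e : Sym2 (V m h)), e ∈ (upWalkAux m h t w hl).edges →
    ∃ (p q : V m h) (a : Fin m), e = s(p, q) ∧ p.val = a :: q.val ∧ w <:+ q.val ∧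
      p.val <:+ t ++ w
  | [], w, hl, e => by simp [upWalkAux]
  | a :: t, w, hl, e => by
      simp only [upWalkAux, Walk.edges_cons, List.mem_cons]
      rintro (rfl | he)
      · exact ⟨_, _, a, rfl, rfl, List.suffix_append _ _, List.suffix_rfl⟩
      · obtain ⟨p, q, b, h1, h2, h3, h4⟩ := edges_upWalkAux t w _ e he
        exact ⟨p, q, b, h1, h2, h3, h4.trans ((t ++ w).suffix_cons a)⟩

noncomputable def upW (x w : V m h) (hw : w.val <:+ x.val) : (completeMAryTree m h).Walk x w :=
  (upWalkAux m h hw.choose w.val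
      (by rw [hw.choose_spec]; exact x.2)).copy (Subtype.ext hw.choose_spec) (Subtype.ext rfl)

lemma mem_support_upW (x w : V m h) (hw : w.val <:+ x.val) (z : V m h) :
    z ∈ (upW x w hw).support ↔ (w.val <:+ z.val ∧ z.val <:+ x.val) := by
  rw [upW, Walk.support_copy, mem_support_upWalkAux, hw.choose_spec]

lemma nodup_support_upW (x w : V m h) (hw : w.val <:+ x.val) :
    (upW x w hw).support.Nodup := by
  rw [upW, Walk.support_copy]; exact nodup_support_upWalkAux _ _ _

lemma edges_upW (x w : V m h) (hw : w.val <:+ x.val) (e : Sym2 (V m h))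
    (he : e ∈ (upW x w hw).edges) :
    ∃ (p q : V m h) (a : Fin m), e = s(p, q) ∧ p.val = a :: q.val ∧ w.val <:+ q.val ∧
      p.val <:+ x.val := by
  rw [upW, Walk.edges_copy] at he
  obtain ⟨p, q, b, h1, h2, h3, h4⟩ := edges_upWalkAux _ _ _ e he
  rw [hw.choose_spec] at h4
  exact ⟨p, q, b, h1, h2, h3, h4⟩

def lcsV (x y : V m h) : V m h := ⟨lcs x.val y.val, le_trans (lcs_suffix_left _ _).length_le x.2⟩

noncomputable def base (x y : V m h) : (completeMAryTree m h).Walk x y :=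
  (upW x (lcsV x y) (lcs_suffix_left _ _)).append
    (upW y (lcsV x y) (lcs_suffix_right _ _)).reverse

lemma isPath_base (x y : V m h) : (base x y).IsPath := by
  rw [Walk.isPath_def, base, Walk.support_append]
  have h2 : ((upW y (lcsV x y) (lcs_suffix_right _ _)).reverse).support.Nodup := by
    rw [Walk.support_reverse, List.nodup_reverse]
    exact nodup_support_upW _ _ _
  refine List.Nodup.append (nodup_support_upW _ _ _) h2.tail ?_
  intro z hz1 hz2
  have hz2' : z ∈ ((upW y (lcsV x y) (lcs_suffix_right _ _)).reverse).support :=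
    List.mem_of_mem_tail hz2
  rw [Walk.support_reverse, List.mem_reverse] at hz2'
  replace hz2' := (mem_support_upW _ _ _ z).mp hz2'
  replace hz1 := (mem_support_upW _ _ _ z).mp hz1
  -- z is a common suffix of x and y, hence a suffix of lcs, hence equals lcsV
  have hzl : z.val <:+ (lcsV x y).val := lcs_max (hz1.2) (hz2'.2)
  have hz : z = lcsV x y := Subtype.ext (hzl.eq_of_length_le (hz1.1.length_le))
  subst hz
  -- but lcsV x y is the head of the reversed support, not in the tail
  have hnodup : ((upW y (lcsV x y) (lcs_suffix_right _ _)).reverse).support.Nodup := h2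
  have hcons := ((upW y (lcsV x y) (lcs_suffix_right _ _)).reverse).support_eq_cons
  rw [hcons] at hnodup hz2
  exact (List.nodup_cons.mp hnodup).1 hz2

lemma edges_base (x y : V m h) (e : Sym2 (V m h)) (he : e ∈ (base x y).edges) :
    ∃ (p q : V m h) (a : Fin m), e = s(p, q) ∧ p.val = a :: q.val ∧
      ((p.val <:+ x.val ∧ ¬ p.val <:+ y.val) ∨ (p.val <:+ y.val ∧ ¬ p.val <:+ x.val)) := by
  rw [base, Walk.edges_append, List.mem_append, Walk.edges_reverse, List.mem_reverse] at he
  rcases he with he | he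
  · obtain ⟨p, q, a, h1, h2, h3, h4⟩ := edges_upW x (lcsV x y) (lcs_suffix_left _ _) e he
    refine ⟨p, q, a, h1, h2, Or.inl ⟨h4, fun hpv => ?_⟩⟩
    have h5 : p.val <:+ q.val := (lcs_max h4 hpv).trans h3
    have := h5.length_le
    rw [h2] at this
    simp at this
  · obtain ⟨p, q, a, h1, h2, h3, h4⟩ := edges_upW y (lcsV x y) (lcs_suffix_right _ _) e he
    refine ⟨p, q, a, h1, h2, Or.inr ⟨h4, fun hpv => ?_⟩⟩
    have h5 : p.val <:+ q.val := (lcs_max hpv h4).trans h3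
    have := h5.length_le
    rw [h2] at this
    simp at this

noncomputable def route (x y : V m h) : (completeMAryTree m h).Walk x y :=
  if Encodable.encode x ≤ Encodable.encode y then base x y else (base y x).reverse

lemma isPath_route (x y : V m h) : (route x y).IsPath := by
  rw [route]; split
  · exact isPath_base x y
  · exact (isPath_base y x).reverse

lemma route_symm (x y : V m h) : route y x = (route x y).reverse := by
  by_cases hxy : x = y
  · subst hxy
    rw [route, if_pos le_rfl]
    show base x x = (base x x).reverse
    rw [base, Walk.reverse_append, Walk.reverse_reverse]
  · have hne : Encodable.encode x ≠ Encodable.encode y :=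
      fun hc => hxy (Encodable.encode_injective hc)
    rcases lt_or_gt_of_ne hne with hlt | hlt
    · rw [route, route, if_neg (not_le.mpr hlt), if_pos hlt.le]
    · rw [route, route, if_pos hlt.le, if_neg (not_le.mpr hlt), Walk.reverse_reverse]

lemma edges_route (x y : V m h) (e : Sym2 (V m h)) (he : e ∈ (route x y).edges) :
    ∃ (p q : V m h) (a : Fin m), e = s(p, q) ∧ p.val = a :: q.val ∧
      ((p.val <:+ x.val ∧ ¬ p.val <:+ y.val) ∨ (p.val <:+ y.val ∧ ¬ p.val <:+ x.val)) := by
  rw [route] at he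
  split at he
  · exact edges_base x y e he
  · rw [Walk.edges_reverse, List.mem_reverse] at he
    obtain ⟨p, q, a, h1, h2, h3⟩ := edges_base y x e he
    exact ⟨p, q, a, h1, h2, h3.symm⟩

noncomputable def R0 (m h : ℕ) : Routing (completeMAryTree m h) :=
  ⟨route, isPath_route, route_symm⟩

end MAry

namespace MAry
variable {m h : ℕ}

abbrev V' (m h : ℕ) := {l : List (Fin m) // l.length ≤ h - 1}

abbrev Color (m h : ℕ) := ZMod m × V' m h × V' m h

def strV (x : V m h) : V' m h :=
  ⟨x.val.dropLast, by have := x.2; have : x.val.dropLast.length = x.val.length - 1 := List.length_dropLast; omega⟩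

def lastF (x : V m h) (hx : x.val ≠ []) : Fin m := x.val.getLast hx

def cst (i : Fin m) : ZMod m := (i.val : ZMod m)

def ord (a : V' m h) : ℕ := Encodable.encode a.val

lemma ord_injective : Function.Injective (ord (m := m) (h := h)) := by
  intro a b hab
  exact Subtype.ext (Encodable.encode_injective hab)

def sort2 (a b : V' m h) : V' m h × V' m h := if ord a ≤ ord b then (a, b) else (b, a)

lemma sort2_comm (a b : V' m h) : sort2 a b = sort2 b a := by
  unfold sort2
  rcases le_or_gt (ord a) (ord b) with hab | hab
  · rcases eq_or_lt_of_le hab with heq | hlt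
    · have : a = b := ord_injective heq
      subst this; simp
    · rw [if_pos hab, if_neg (by omega)]
  · rw [if_neg (by omega), if_pos hab.le]

lemma sort2_cases (a b : V' m h) : sort2 a b = (a, b) ∨ sort2 a b = (b, a) := by
  unfold sort2; split <;> simp

def rootV' : V' m h := ⟨[], by simp⟩

noncomputable def colFun (x y : V m h) : Color m h :=
  if hx : x.val = [] then
    (if hy : y.val = [] then ((0 : ZMod m), rootV', rootV')
     else (cst (lastF y hy) + cst (lastF y hy), strV y, strV y))
  else if hy : y.val = [] then (cst (lastF x hx) + cst (lastF x hx), strV x, strV x)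
  else
    if lastF x hx = lastF y hy then
      (cst (lastF x hx) + cst (lastF x hx), (sort2 (strV x) (strV y)).1,
        (sort2 (strV x) (strV y)).2)
    else (cst (lastF x hx) + cst (lastF y hy),
      if (lastF x hx).val < (lastF y hy).val then (strV x, strV y) else (strV y, strV x))

lemma colFun_symm (x y : V m h) : colFun x y = colFun y x := by
  unfold colFun
  by_cases hx : x.val = [] <;> by_cases hy : y.val = []
  · rw [dif_pos hx, dif_pos hy, dif_pos hy, dif_pos hx]
  · rw [dif_pos hx, dif_neg hy, dif_neg hy, dif_pos hx]
  · rw [dif_neg hx, dif_pos hy, dif_pos hy, dif_neg hx]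
  · rw [dif_neg hx, dif_neg hy, dif_neg hy, dif_neg hx]
    by_cases hl : lastF x hx = lastF y hy
    · rw [if_pos hl, if_pos hl.symm, hl, sort2_comm]
    · rw [if_neg hl, if_neg (Ne.symm hl)]
      have hne : (lastF x hx).val ≠ (lastF y hy).val := fun hc => hl (Fin.ext hc)
      rcases lt_or_gt_of_ne hne with hlt | hlt
      · rw [if_pos hlt, if_neg (by omega), add_comm]
      · rw [if_neg (by omega), if_pos hlt, add_comm]

/-- reconstruction -/
lemma recon (x : V m h) (hx : x.val ≠ []) :
    x.val = (strV x).val ++ [lastF x hx] := (List.dropLast_append_getLast hx).symm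

lemma eq_of_str_last (x y : V m h) (hx : x.val ≠ []) (hy : y.val ≠ [])
    (h1 : strV x = strV y) (h2 : lastF x hx = lastF y hy) : x = y := by
  apply Subtype.ext
  rw [recon x hx, recon y hy, h2, Subtype.ext_iff] at *
  rw [h1]

lemma strV_ne (x y : V m h) (hx : x.val ≠ []) (hy : y.val ≠ [])
    (hne : x ≠ y) (h2 : lastF x hx = lastF y hy) : strV x ≠ strV y :=
  fun hc => hne (eq_of_str_last x y hx hy hc h2)

lemma getLast_of_suffix {w x : List (Fin m)} (hw : w ≠ []) (hsuf : w <:+ x) (hx : x ≠ []) :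
    x.getLast hx = w.getLast hw := by
  obtain ⟨t, rfl⟩ := hsuf
  rw [List.getLast_append]
  simp [hw]

lemma ne_nil_of_suffix {w x : List (Fin m)} (hw : w ≠ []) (hsuf : w <:+ x) : x ≠ [] := by
  rintro rfl
  exact hw (List.suffix_nil.mp hsuf)

lemma cast_inj_fin (hm1 : 1 ≤ m) (i j : Fin m) (hc : cst i = cst j) : i = j := by
  haveI : NeZero m := ⟨by omega⟩
  apply Fin.ext
  have h1 := ZMod.val_cast_of_lt i.2
  have h2 := ZMod.val_cast_of_lt j.2
  rw [← h1, ← h2]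
  unfold cst at hc
  rw [hc]

lemma key (hm1 : 1 ≤ m) (u v u' v' : V m h) (huv : u ≠ v) (huv' : u' ≠ v')
    (w : List (Fin m)) (hw : w ≠ [])
    (h1 : w <:+ u.val) (h2 : ¬ w <:+ v.val) (h3 : w <:+ u'.val) (h4 : ¬ w <:+ v'.val)
    (hcol : colFun u v = colFun u' v') : s(u, v) = s(u', v') := by
  have hu : u.val ≠ [] := ne_nil_of_suffix hw h1
  have hu' : u'.val ≠ [] := ne_nil_of_suffix hw h3
  have htt : lastF u hu = lastF u' hu' :=
    (getLast_of_suffix hw h1 hu).trans (getLast_of_suffix hw h3 hu').symm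
  rw [colFun, dif_neg hu, colFun, dif_neg hu'] at hcol
  by_cases hv : v.val = []
  · rw [dif_pos hv] at hcol
    by_cases hv' : v'.val = []
    · -- root, root
      rw [dif_pos hv'] at hcol
      simp only [Prod.mk.injEq] at hcol
      obtain ⟨hc1, hc2, hc3⟩ := hcol
      rw [eq_of_str_last u u' hu hu' hc2 htt, Subtype.ext (hv.trans hv'.symm : v.val = v'.val)]
    · rw [dif_neg hv'] at hcol
      by_cases hl' : lastF u' hu' = lastF v' hv'
      · -- root vs internal
        rw [if_pos hl'] at hcol
        simp only [Prod.mk.injEq] at hcol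
        obtain ⟨hc1, hc2, hc3⟩ := hcol
        exfalso
        have hsne : strV u' ≠ strV v' := strV_ne u' v' hu' hv' huv' hl'
        rcases sort2_cases (strV u') (strV v') with hs | hs <;> rw [hs] at hc2 hc3 <;>
          dsimp only at hc2 hc3 <;>
          first
          | exact hsne (hc2.symm.trans hc3)
          | exact hsne (hc3.symm.trans hc2)
      · -- root vs through
        rw [if_neg hl'] at hcol
        simp only [Prod.mk.injEq] at hcol
        obtain ⟨hc1, -⟩ := hcol
        rw [htt] at hc1
        exact absurd (cast_inj_fin hm1 _ _ (add_left_cancel hc1)) hl'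
  · rw [dif_neg hv] at hcol
    by_cases hl : lastF u hu = lastF v hv
    · rw [if_pos hl] at hcol
      by_cases hv' : v'.val = []
      · -- internal vs root
        rw [dif_pos hv'] at hcol
        simp only [Prod.mk.injEq] at hcol
        obtain ⟨hc1, hc2, hc3⟩ := hcol
        exfalso
        have hsne : strV u ≠ strV v := strV_ne u v hu hv huv hl
        rcases sort2_cases (strV u) (strV v) with hs | hs <;> rw [hs] at hc2 hc3 <;>
          dsimp only at hc2 hc3 <;>
          first
          | exact hsne (hc2.trans hc3.symm)
          | exact hsne (hc3.trans hc2.symm)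
      · rw [dif_neg hv'] at hcol
        by_cases hl' : lastF u' hu' = lastF v' hv'
        · -- internal, internal
          rw [if_pos hl'] at hcol
          simp only [Prod.mk.injEq] at hcol
          obtain ⟨hc1, hc2, hc3⟩ := hcol
          have hlv : lastF v hv = lastF v' hv' := by rw [← hl, ← hl', htt]
          rcases sort2_cases (strV u) (strV v) with hs | hs <;>
            rcases sort2_cases (strV u') (strV v') with hs' | hs' <;>
            rw [hs, hs'] at hc2 hc3 <;> dsimp only at hc2 hc3
          · rw [eq_of_str_last u u' hu hu' hc2 htt, eq_of_str_last v v' hv hv' hc3 hlv]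
          · rw [eq_of_str_last u v' hu hv' hc2 (by rw [htt, hl']),
              eq_of_str_last v u' hv hu' hc3 (by rw [← htt, ← hl]), Sym2.eq_swap]
          · rw [eq_of_str_last u v' hu hv' hc3 (by rw [htt, hl']),
              eq_of_str_last v u' hv hu' hc2 (by rw [← htt, ← hl]), Sym2.eq_swap]
          · rw [eq_of_str_last u u' hu hu' hc3 htt, eq_of_str_last v v' hv hv' hc2 hlv]
        · -- internal vs through
          rw [if_neg hl'] at hcol
          simp only [Prod.mk.injEq] at hcol
          obtain ⟨hc1, -⟩ := hcol
          rw [htt] at hc1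
          exact absurd (cast_inj_fin hm1 _ _ (add_left_cancel hc1)) hl'
    · rw [if_neg hl] at hcol
      by_cases hv' : v'.val = []
      · -- through vs root
        rw [dif_pos hv'] at hcol
        simp only [Prod.mk.injEq] at hcol
        obtain ⟨hc1, -⟩ := hcol
        rw [← htt] at hc1
        exact absurd (cast_inj_fin hm1 _ _ (add_left_cancel hc1)).symm hl
      · rw [dif_neg hv'] at hcol
        by_cases hl' : lastF u' hu' = lastF v' hv'
        · -- through vs internal
          rw [if_pos hl'] at hcol
          simp only [Prod.mk.injEq] at hcol
          obtain ⟨hc1, -⟩ := hcol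
          rw [← htt] at hc1
          exact absurd (cast_inj_fin hm1 _ _ (add_left_cancel hc1)).symm hl
        · -- through, through
          rw [if_neg hl'] at hcol
          simp only [Prod.mk.injEq] at hcol
          obtain ⟨hc1, hc2⟩ := hcol
          rw [htt] at hc1
          have hjj : lastF v hv = lastF v' hv' := cast_inj_fin hm1 _ _ (add_left_cancel hc1)
          rw [htt, hjj] at hc2
          by_cases hord : (lastF u' hu').val < (lastF v' hv').val
          · rw [if_pos hord, if_pos hord] at hc2
            simp only [Prod.mk.injEq] at hc2
            rw [eq_of_str_last u u' hu hu' hc2.1 htt, eq_of_str_last v v' hv hv' hc2.2 hjj]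
          · rw [if_neg hord, if_neg hord] at hc2
            simp only [Prod.mk.injEq] at hc2
            rw [eq_of_str_last u u' hu hu' hc2.2 htt, eq_of_str_last v v' hv hv' hc2.1 hjj]

end MAry

namespace MAry
variable {m h : ℕ}

noncomputable def colS (p : {p : Sym2 (V m h) // ¬ p.IsDiag}) : Color m h :=
  Sym2.lift ⟨colFun, colFun_symm⟩ p.val

lemma ne_of_nondiag {p : {p : Sym2 (V m h) // ¬ p.IsDiag}} {u v : V m h}
    (hp : p.val = s(u, v)) : u ≠ v := by
  intro hc
  exact p.2 (by rw [hp, hc]; exact Sym2.mk_isDiag_iff.mpr rfl)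

lemma proper (hm1 : 1 ≤ m) {p q : {p : Sym2 (V m h) // ¬ p.IsDiag}}
    (hadj : (R0 m h).conflictGraph.Adj p q) : colS p ≠ colS q := by
  obtain ⟨hne, u, v, u', v', e, hp, hq, he1, he2⟩ := hadj
  intro hcol
  have he1' : e ∈ (route u v).edges := he1
  have he2' : e ∈ (route u' v').edges := he2
  obtain ⟨pp, qq, a, heq, hcons, hcr⟩ := edges_route u v e he1'
  obtain ⟨pp', qq', a', heq', hcons', hcr'⟩ := edges_route u' v' e he2'
  have hpp : pp = pp' := by
    rw [heq] at heq'
    rcases Sym2.eq_iff.mp heq' with ⟨hx, hy⟩ | ⟨hx, hy⟩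
    · exact hx
    · exfalso
      have l1 := congrArg List.length hcons
      have l2 := congrArg List.length hcons'
      rw [hx] at hcons
      rw [← hy] at hcons'
      have l3 := congrArg List.length hcons'
      rw [hcons] at l3
      simp only [List.length_cons] at l1 l2 l3
      omega
  have hw : pp.val ≠ [] := by rw [hcons]; simp
  have hcuv : colFun u v = colFun u' v' := by
    have e1 : colS p = colFun u v := by rw [colS, hp, Sym2.lift_mk]
    have e2 : colS q = colFun u' v' := by rw [colS, hq, Sym2.lift_mk]
    rw [← e1, ← e2, hcol]
  have huv : u ≠ v := ne_of_nondiag hp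
  have huv' : u' ≠ v' := ne_of_nondiag hq
  rw [← hpp] at hcr'
  have hfin : s(u, v) = s(u', v') := by
    rcases hcr with ⟨ha, hb⟩ | ⟨ha, hb⟩ <;> rcases hcr' with ⟨ha', hb'⟩ | ⟨ha', hb'⟩
    · exact key hm1 u v u' v' huv huv' pp.val hw ha hb ha' hb' hcuv
    · exact (key hm1 u v v' u' huv huv'.symm pp.val hw ha hb ha' hb'
        (hcuv.trans (colFun_symm u' v'))).trans (Sym2.eq_swap)
    · exact (Sym2.eq_swap).trans (key hm1 v u u' v' huv.symm huv' pp.val hw ha hb ha' hb'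
        ((colFun_symm v u).trans hcuv))
    · exact (Sym2.eq_swap).trans ((key hm1 v u v' u' huv.symm huv'.symm pp.val hw ha hb ha' hb'
        (((colFun_symm v u).trans hcuv).trans (colFun_symm u' v'))).trans (Sym2.eq_swap))
  exact hne (Subtype.ext (hp.trans (hfin.trans hq.symm)))

noncomputable def goodColoring (hm1 : 1 ≤ m) :
    (R0 m h).conflictGraph.Coloring (Color m h) :=
  SimpleGraph.Coloring.mk colS (fun hadj => proper hm1 hadj)

def listLenEquivZero (m : ℕ) : {l : List (Fin m) // l.length ≤ 0} ≃ Unit where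
  toFun _ := ()
  invFun _ := ⟨[], by simp⟩
  left_inv := by rintro ⟨l, hl⟩; exact Subtype.ext (List.length_eq_zero_iff.mp (Nat.le_zero.mp hl)).symm
  right_inv := by rintro ⟨⟩; rfl

def listLenEquivSucc (m k : ℕ) :
    {l : List (Fin m) // l.length ≤ k + 1} ≃ Unit ⊕ (Fin m × {l : List (Fin m) // l.length ≤ k}) where
  toFun x :=
    match x with
    | ⟨[], _⟩ => Sum.inl ()
    | ⟨a :: t, ht⟩ => Sum.inr (a, ⟨t, by simpa using Nat.le_of_succ_le_succ ht⟩)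
  invFun z :=
    match z with
    | Sum.inl _ => ⟨[], by simp⟩
    | Sum.inr (a, t) => ⟨a :: t.val, by simpa using Nat.succ_le_succ t.2⟩
  left_inv := by rintro ⟨(_ | ⟨a, t⟩), hl⟩ <;> rfl
  right_inv := by rintro (⟨⟩ | ⟨a, ⟨t, ht⟩⟩) <;> rfl

instance fintypeListLen (m : ℕ) : ∀ k : ℕ, Fintype {l : List (Fin m) // l.length ≤ k}
  | 0 => Fintype.ofEquiv Unit (listLenEquivZero m).symm
  | (k + 1) =>
    letI := fintypeListLen m k
    Fintype.ofEquiv _ (listLenEquivSucc m k).symm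

lemma cardLists (m : ℕ) : ∀ k : ℕ,
    Fintype.card {l : List (Fin m) // l.length ≤ k} = ∑ i ∈ Finset.range (k + 1), m ^ i
  | 0 => by
    rw [Fintype.card_congr (listLenEquivZero m)]
    simp
  | (k + 1) => by
    rw [Fintype.card_congr (listLenEquivSucc m k), Fintype.card_sum, Fintype.card_prod,
      Fintype.card_unit, Fintype.card_fin, cardLists m k,
      geom_sum_succ (x := m) (n := k + 1)]
    ring

end MAry

namespace MAry
open scoped Classical
variable {m h : ℕ}

abbrev NDP (m h : ℕ) := {p : Sym2 (V m h) // ¬ p.IsDiag}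

def crossP (w : List (Fin m)) : Sym2 (V m h) → Prop :=
  Sym2.lift ⟨fun x y => (w <:+ x.val ∧ ¬ w <:+ y.val) ∨ (w <:+ y.val ∧ ¬ w <:+ x.val),
    fun _ _ => propext or_comm⟩

lemma crossP_mk (w : List (Fin m)) (x y : V m h) :
    crossP w s(x, y) ↔ (w <:+ x.val ∧ ¬ w <:+ y.val) ∨ (w <:+ y.val ∧ ¬ w <:+ x.val) := by
  rw [crossP, Sym2.lift_mk]

lemma crossP_elim {w : List (Fin m)} {P : Sym2 (V m h)} (hc : crossP w P) :
    ∃ u v, P = s(u, v) ∧ w <:+ u.val ∧ ¬ w <:+ v.val := by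
  induction P using Sym2.inductionOn with
  | hf x y =>
    rcases (crossP_mk w x y).mp hc with ⟨h1, h2⟩ | ⟨h1, h2⟩
    · exact ⟨x, y, rfl, h1, h2⟩
    · exact ⟨y, x, Sym2.eq_swap, h1, h2⟩

lemma mem_edges_of_cross (R : Routing (completeMAryTree m h)) {w : List (Fin m)}
    (hw : w ≠ []) (hwl : w.length ≤ h) {u v : V m h}
    (h1 : w <:+ u.val) (h2 : ¬ w <:+ v.val) :
    s((⟨w, hwl⟩ : V m h), (⟨w.tail, by have : w.tail.length = w.length - 1 := List.length_tail; omega⟩ : V m h)) ∈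
      (R.path u v).edges := by
  have htl : w.tail.length ≤ h := by have : w.tail.length = w.length - 1 := List.length_tail; omega
  obtain ⟨d, hd, hfst, hsnd⟩ := (R.path u v).exists_boundary_dart
    {z : V m h | w <:+ z.val} h1 h2
  have hadj := d.adj
  rcases hadj with ⟨a, ha⟩ | ⟨a, ha⟩
  · -- d.fst = a :: d.snd
    have hfst' : w <:+ d.toProd.1.val := hfst
    rw [ha] at hfst'
    rcases List.suffix_cons_iff.mp hfst' with hw1 | hw1
    · have e1 : d.toProd.1 = (⟨w, hwl⟩ : V m h) := Subtype.ext (by rw [ha, ← hw1])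
      have e2 : d.toProd.2 = (⟨w.tail, htl⟩ : V m h) := by
        apply Subtype.ext
        show d.toProd.2.val = w.tail
        rw [hw1]
        rfl
      have e3 : s((⟨w, hwl⟩ : V m h), (⟨w.tail, htl⟩ : V m h)) = d.edge := by
        rw [← e1, ← e2]; rfl
      have hmem := List.mem_map_of_mem (f := Dart.edge) hd
      rw [← e3] at hmem
      exact hmem
    · exact absurd hw1 hsnd
  · -- d.snd = a :: d.fst
    exfalso
    apply hsnd
    have : d.toProd.1.val <:+ d.toProd.2.val := by rw [ha]; exact List.suffix_cons a _
    exact (hfst : w <:+ _).trans this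

lemma singleton_suffix_iff {i : Fin m} {l : List (Fin m)} :
    [i] <:+ l ↔ ∃ hl : l ≠ [], l.getLast hl = i := by
  constructor
  · intro hs
    have hl : l ≠ [] := ne_nil_of_suffix (by simp) hs
    exact ⟨hl, by rw [getLast_of_suffix (by simp) hs hl]; rfl⟩
  · rintro ⟨hl, rfl⟩
    conv_rhs => rw [← List.dropLast_append_getLast hl]
    exact (List.suffix_append _ _).trans (List.suffix_rfl)

-- the subtree of level-1 index i
def subEquiv (hh : 1 ≤ h) (i : Fin m) :
    {x : V m h // [i] <:+ x.val} ≃ {l : List (Fin m) // l.length ≤ h - 1} where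
  toFun x := ⟨x.val.val.dropLast, by
    have := x.val.2
    have : x.val.val.dropLast.length = x.val.val.length - 1 := List.length_dropLast
    omega⟩
  invFun l := ⟨⟨l.val ++ [i], by
      have := l.2
      simp only [List.length_append, List.length_cons, List.length_nil]
      omega⟩,
    List.suffix_append _ _⟩
  left_inv := by
    rintro ⟨⟨l, hl⟩, hs⟩
    obtain ⟨t, ht⟩ := hs
    have ht' : t ++ [i] = l := ht
    apply Subtype.ext
    apply Subtype.ext
    show l.dropLast ++ [i] = l
    rw [← ht', List.dropLast_concat]
  right_inv := by
    rintro ⟨l, hl⟩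
    apply Subtype.ext
    simp only
    rw [List.dropLast_concat]

lemma card_subtree (hh : 1 ≤ h) (i : Fin m) :
    Fintype.card {x : V m h // [i] <:+ x.val} = ∑ j ∈ Finset.range h, m ^ j := by
  rw [Fintype.card_congr (subEquiv hh i), cardLists m (h - 1)]
  have : h - 1 + 1 = h := by omega
  rw [this]

noncomputable def crossEquiv (i : Fin m) :
    ({x : V m h // [i] <:+ x.val} × {y : V m h // ¬ [i] <:+ y.val}) ≃
      {p : NDP m h // crossP [i] p.val} := by
  apply Equiv.ofBijective (f := fun z =>
    ⟨⟨s(z.1.val, z.2.val), by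
        rw [Sym2.mk_isDiag_iff]
        intro hc
        exact z.2.2 (hc ▸ z.1.2)⟩,
      by rw [crossP_mk]; exact Or.inl ⟨z.1.2, z.2.2⟩⟩)
  constructor
  · rintro ⟨⟨x, hx⟩, ⟨y, hy⟩⟩ ⟨⟨x', hx'⟩, ⟨y', hy'⟩⟩ hz
    simp only [Subtype.mk.injEq] at hz
    rcases Sym2.eq_iff.mp hz with ⟨rfl, rfl⟩ | ⟨rfl, rfl⟩
    · rfl
    · exact absurd hx' hy
  · rintro ⟨⟨P, hnd⟩, hcr⟩
    obtain ⟨u, v, hP, h1, h2⟩ := crossP_elim hcr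
    exact ⟨⟨⟨u, h1⟩, ⟨v, h2⟩⟩, Subtype.ext (Subtype.ext hP.symm)⟩

lemma card_cross (hh : 1 ≤ h) (i : Fin m) :
    Fintype.card {p : NDP m h // crossP [i] p.val} =
      (∑ j ∈ Finset.range h, m ^ j) * (Fintype.card (V m h) - ∑ j ∈ Finset.range h, m ^ j) := by
  classical
  rw [← Fintype.card_congr (crossEquiv i), Fintype.card_prod, card_subtree hh i,
    Fintype.card_subtype_compl, card_subtree hh i]

def rootVV : V m h := ⟨[], by simp⟩

noncomputable def rootEquiv : {u : V m h // u ≠ rootVV} ≃ {p : NDP m h // rootVV ∈ p.val} := by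
  apply Equiv.ofBijective (f := fun u =>
    ⟨⟨s(rootVV, u.val), by
        rw [Sym2.mk_isDiag_iff]
        exact fun hc => u.2 hc.symm⟩,
      Sym2.mem_mk_left _ _⟩)
  constructor
  · rintro ⟨u, hu⟩ ⟨u', hu'⟩ hz
    simp only [Subtype.mk.injEq] at hz
    rcases Sym2.eq_iff.mp hz with ⟨-, rfl⟩ | ⟨-, hc⟩
    · rfl
    · exact absurd hc hu
  · rintro ⟨⟨P, hnd⟩, hmem⟩
    obtain ⟨y, hy⟩ := Sym2.mem_iff_exists.mp hmem
    have hy' : P = s(rootVV, y) := hy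
    have hnd' : ¬ (P.IsDiag) := hnd
    refine ⟨⟨y, fun hc => ?_⟩, Subtype.ext (Subtype.ext hy'.symm)⟩
    exact hnd' (by rw [hy', hc]; exact Sym2.mk_isDiag_iff.mpr rfl)

lemma card_rootPairs (hh : 1 ≤ h) :
    Fintype.card {p : NDP m h // rootVV ∈ p.val} = Fintype.card (V m h) - 1 := by
  classical
  rw [← Fintype.card_congr (rootEquiv (m := m) (h := h)),
    Fintype.card_subtype_compl (p := fun u : V m h => u = rootVV),
    Fintype.card_subtype_eq]

lemma cardV_eq (hh : 1 ≤ h) :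
    Fintype.card (V m h) = 1 + m * ∑ j ∈ Finset.range h, m ^ j := by
  rw [cardLists m h]
  obtain ⟨k, rfl⟩ : ∃ k, h = k + 1 := ⟨h - 1, by omega⟩
  rw [geom_sum_succ]
  ring

end MAry

namespace MAry
open scoped Classical
variable {m h : ℕ}

lemma rootVV_val : (rootVV : V m h).val = [] := rfl

lemma ne_root_iff {u : V m h} : u ≠ rootVV ↔ u.val ≠ [] := by
  constructor
  · intro hu hc; exact hu (Subtype.ext hc)
  · intro hu hc; exact hu (by rw [hc]; rfl)

lemma singleton_suffix_iff' {i : Fin m} {l : List (Fin m)} (hl : l ≠ []) :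
    [i] <:+ l ↔ l.getLast hl = i := by
  rw [singleton_suffix_iff]
  constructor
  · rintro ⟨hl', hlast⟩; exact hlast
  · intro hlast; exact ⟨hl, hlast⟩

lemma crossP_root_iff {i : Fin m} {y : V m h} :
    crossP [i] s(rootVV, y) ↔ [i] <:+ y.val := by
  rw [crossP_mk]
  have hnil : ¬ ([i] <:+ (rootVV : V m h).val) := by
    rw [rootVV_val]
    intro hc
    simpa using List.suffix_nil.mp hc
  constructor
  · rintro (⟨hc, -⟩ | ⟨hc, -⟩)
    · exact absurd hc hnil
    · exact hc
  · intro hy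
    exact Or.inr ⟨hy, hnil⟩

lemma nu_root_eq (hh : 1 ≤ h) {P : Sym2 (V m h)} (hnd : ¬ P.IsDiag) (hr : rootVV ∈ P) :
    (Finset.univ.filter fun i : Fin m => crossP [i] P).card = 1 := by
  obtain ⟨y, rfl⟩ := Sym2.mem_iff_exists.mp hr
  have hy : y.val ≠ [] := by
    rw [← ne_root_iff]
    intro hc
    exact hnd (by rw [hc]; exact Sym2.mk_isDiag_iff.mpr rfl)
  have : (Finset.univ.filter fun i : Fin m => crossP [i] s(rootVV, y)) = {y.val.getLast hy} := by
    ext i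
    simp only [Finset.mem_filter, Finset.mem_univ, true_and, Finset.mem_singleton,
      crossP_root_iff, singleton_suffix_iff' hy]
    exact eq_comm
  rw [this, Finset.card_singleton]

lemma nu_even (hh : 1 ≤ h) {P : Sym2 (V m h)} (hnd : ¬ P.IsDiag) (hr : rootVV ∉ P) :
    Even (Finset.univ.filter fun i : Fin m => crossP [i] P).card := by
  induction P using Sym2.inductionOn with
  | hf u v =>
    have hu : u.val ≠ [] := by
      rw [← ne_root_iff]; intro hc; exact hr (by rw [hc]; exact Sym2.mem_mk_left _ _)
    have hv : v.val ≠ [] := by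
      rw [← ne_root_iff]; intro hc; exact hr (by rw [hc]; exact Sym2.mem_mk_right _ _)
    have hcr : ∀ i : Fin m, crossP [i] s(u, v) ↔
        ((u.val.getLast hu = i ∧ ¬ v.val.getLast hv = i) ∨
         (v.val.getLast hv = i ∧ ¬ u.val.getLast hu = i)) := by
      intro i
      rw [crossP_mk, singleton_suffix_iff' hu, singleton_suffix_iff' hv]
    by_cases heq : u.val.getLast hu = v.val.getLast hv
    · have : (Finset.univ.filter fun i : Fin m => crossP [i] s(u, v)) = ∅ := by
        apply Finset.filter_eq_empty_iff.mpr
        intro i _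
        rw [hcr i]
        rintro (⟨h1, h2⟩ | ⟨h1, h2⟩)
        · exact h2 (heq ▸ h1)
        · exact h2 (heq.symm ▸ h1)
      rw [this]
      simp
    · have : (Finset.univ.filter fun i : Fin m => crossP [i] s(u, v)) =
          {u.val.getLast hu, v.val.getLast hv} := by
        ext i
        simp only [Finset.mem_filter, Finset.mem_univ, true_and, Finset.mem_insert,
          Finset.mem_singleton, hcr i]
        constructor
        · rintro (⟨h1, -⟩ | ⟨h1, -⟩)
          · exact Or.inl h1.symm
          · exact Or.inr h1.symm
        · rintro (rfl | rfl)
          · exact Or.inl ⟨rfl, fun hc => heq hc.symm⟩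
          · exact Or.inr ⟨rfl, fun hc => heq hc⟩
      rw [this, Finset.card_pair heq]
      exact even_two

set_option maxHeartbeats 2000000 in
theorem lower_bound (hm : Odd m) (hm3 : 3 ≤ m) (hh : 1 ≤ h)
    (R : Routing (completeMAryTree m h)) (n : ℕ) (hcol : R.conflictGraph.Colorable n) :
    m * (∑ i ∈ Finset.range h, m ^ i) ^ 2 ≤ n := by
  obtain ⟨C⟩ := hcol
  set S := ∑ i ∈ Finset.range h, m ^ i with hS
  have hS1 : 1 ≤ S := by
    rw [hS]
    calc 1 = m ^ 0 := by norm_num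
    _ ≤ ∑ i ∈ Finset.range h, m ^ i :=
      Finset.single_le_sum (f := fun i => m ^ i) (fun i _ => Nat.zero_le _)
        (Finset.mem_range.mpr (by omega))
  have hNc := cardV_eq (m := m) hh
  set Nc := Fintype.card (V m h) with hNcdef
  rw [← hS] at hNc
  set Xf : Finset (NDP m h × Fin m) :=
    Finset.univ.filter (fun pc => crossP [pc.2] pc.1.val) with hXf
  have hil : ∀ i : Fin m, ([i] : List (Fin m)).length ≤ h := by intro i; simpa using hh
  -- total count
  have hper : ∀ i : Fin m,
      (Xf.filter (fun pc => pc.2 = i)).card =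
        (Finset.univ.filter (fun p : NDP m h => crossP [i] p.val)).card := by
    intro i
    apply Finset.card_bij (i := fun pc _ => pc.1)
    · intro pc hpc
      simp only [hXf, Finset.mem_filter, Finset.mem_univ, true_and] at hpc ⊢
      obtain ⟨h1, h2⟩ := hpc
      rw [h2] at h1
      exact h1
    · intro pc hpc qc hqc heq
      simp only [hXf, Finset.mem_filter] at hpc hqc
      exact Prod.ext heq (hpc.2.trans hqc.2.symm)
    · intro p hp
      simp only [Finset.mem_filter, Finset.mem_univ, true_and] at hp
      exact ⟨(p, i), by simp [hXf, hp], rfl⟩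
  have hXcard : Xf.card = m * (S * (Nc - S)) := by
    rw [Finset.card_eq_sum_card_fiberwise (f := Prod.snd) (t := Finset.univ)
      (fun x _ => Finset.mem_univ _)]
    have : ∀ i : Fin m, (Xf.filter (fun pc => pc.2 = i)).card = S * (Nc - S) := by
      intro i
      rw [hper i]
      have := card_cross (m := m) hh i
      rw [Fintype.card_subtype] at this
      exact this
    rw [Finset.sum_congr rfl (fun i _ => this i)]
    simp [mul_comm]
  -- per-color fibers
  set Y : Fin n → Finset (NDP m h × Fin m) := fun c => Xf.filter (fun pc => C pc.1 = c)
    with hY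
  have hfib : Xf.card = ∑ c : Fin n, (Y c).card :=
    Finset.card_eq_sum_card_fiberwise (f := fun pc : NDP m h × Fin m => C pc.1) (t := Finset.univ)
      (fun x _ => Finset.mem_univ _)
  have hYle : ∀ c, (Y c).card ≤ m := by
    intro c
    have hinj : Set.InjOn Prod.snd (Y c : Set (NDP m h × Fin m)) := by
      intro a ha b hb hab
      simp only [hY, hXf, Finset.coe_filter, Set.mem_setOf_eq, Finset.mem_filter,
        Finset.mem_univ, true_and] at ha hb
      obtain ⟨ha1, ha2⟩ := ha
      obtain ⟨hb1, hb2⟩ := hb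
      by_contra hne
      have hfstne : a.1 ≠ b.1 := fun hc => hne (Prod.ext hc hab)
      obtain ⟨u, v, hP, hc1, hc2⟩ := crossP_elim ha1
      obtain ⟨u', v', hP', hc1', hc2'⟩ := crossP_elim hb1
      rw [hab] at hc1 hc2
      have hadj : R.conflictGraph.Adj a.1 b.1 := by
        refine ⟨hfstne, u, v, u', v',
          s((⟨[b.2], hil b.2⟩ : V m h), (⟨([b.2] : List (Fin m)).tail, by simp⟩ : V m h)),
          hP, hP', ?_, ?_⟩
        · exact mem_edges_of_cross R (by simp) (hil b.2) hc1 hc2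
        · exact mem_edges_of_cross R (by simp) (hil b.2) hc1' hc2'
      exact C.valid hadj (ha2.trans hb2.symm)
    have := Finset.card_le_card_of_injOn Prod.snd (fun a _ => Finset.mem_univ a.2) hinj
    simpa using this
  have hYnu : ∀ c, (Y c).card =
      ∑ p ∈ Finset.univ.filter (fun p : NDP m h => C p = c),
        (Finset.univ.filter fun i : Fin m => crossP [i] p.val).card := by
    intro c
    rw [Finset.card_eq_sum_card_fiberwise (f := Prod.fst)
      (t := Finset.univ.filter (fun p : NDP m h => C p = c))
      (by intro x hx; simp only [hY, Finset.coe_filter, Set.mem_setOf_eq] at hx; simp [hx.2])]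
    apply Finset.sum_congr rfl
    intro p hp
    apply Finset.card_bij (i := fun pc _ => pc.2)
    · intro pc hpc
      simp only [hY, hXf, Finset.mem_filter, Finset.mem_univ, true_and] at hpc ⊢
      obtain ⟨⟨hcr, -⟩, heqp⟩ := hpc
      rw [heqp] at hcr
      exact hcr
    · intro pc hpc qc hqc heq
      simp only [hY, hXf, Finset.mem_filter] at hpc hqc
      exact Prod.ext (hpc.2.trans hqc.2.symm) heq
    · intro i hi
      simp only [Finset.mem_filter, Finset.mem_univ, true_and] at hi hp
      exact ⟨(p, i), by simp [hY, hXf, hi, hp], rfl⟩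
  set F : Finset (Fin n) := Finset.univ.filter (fun c => (Y c).card = m) with hF
  have hFroot : ∀ c ∈ F, ∃ p : NDP m h, C p = c ∧ rootVV ∈ p.val := by
    intro c hc
    by_contra hno
    push_neg at hno
    have heven : Even ((Y c).card) := by
      rw [hYnu c]
      apply Finset.even_sum
      intro p hp
      simp only [Finset.mem_filter, Finset.mem_univ, true_and] at hp
      exact nu_even hh p.2 (hno p hp)
    simp only [hF, Finset.mem_filter, Finset.mem_univ, true_and] at hc
    rw [hc] at heven
    rw [Nat.even_iff] at heven
    rw [Nat.odd_iff] at hm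
    omega
  have hd0 : ¬ (s((rootVV : V m h), (⟨[⟨0, by omega⟩], by simpa using hh⟩ : V m h))).IsDiag := by
    rw [Sym2.mk_isDiag_iff]
    intro hc
    have := congrArg (fun z : V m h => z.val) hc
    simp [rootVV] at this
  have hFcard : F.card ≤ m * S := by
    have hle : F.card ≤ (Finset.univ.filter (fun p : NDP m h => rootVV ∈ p.val)).card := by
      set g : Fin n → NDP m h := fun c =>
        if hc : ∃ p : NDP m h, C p = c ∧ rootVV ∈ p.val then hc.choose
        else ⟨_, hd0⟩ with hg
      apply Finset.card_le_card_of_injOn g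
      · intro c hc
        have hex := hFroot c hc
        simp only [Finset.coe_filter, Finset.mem_univ, true_and, Set.mem_setOf_eq]
        rw [hg]
        simp only [dif_pos hex]
        exact hex.choose_spec.2
      · intro c hc c' hc' heq
        have hex := hFroot c (by exact hc)
        have hex' := hFroot c' (by exact hc')
        have e1 : C (g c) = c := by rw [hg]; simp only [dif_pos hex]; exact hex.choose_spec.1
        have e2 : C (g c') = c' := by rw [hg]; simp only [dif_pos hex']; exact hex'.choose_spec.1
        rw [← e1, ← e2, heq]
    have hrp : (Finset.univ.filter (fun p : NDP m h => rootVV ∈ p.val)).card = Nc - 1 := by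
      have := card_rootPairs (m := m) hh
      rw [Fintype.card_subtype] at this
      exact this
    rw [hrp] at hle
    have : Nc - 1 = m * S := by omega
    omega
  -- sum bound
  have hsum : ∑ c : Fin n, (Y c).card ≤ (m - 1) * n + F.card := by
    calc ∑ c : Fin n, (Y c).card
        ≤ ∑ c : Fin n, ((m - 1) + if c ∈ F then 1 else 0) := by
          apply Finset.sum_le_sum
          intro c _
          by_cases hcF : c ∈ F
          · rw [if_pos hcF]
            simp only [hF, Finset.mem_filter, Finset.mem_univ, true_and] at hcF
            omega
          · rw [if_neg hcF]
            simp only [hF, Finset.mem_filter, Finset.mem_univ, true_and] at hcF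
            have := hYle c
            omega
      _ = (m - 1) * n + F.card := by
          rw [Finset.sum_add_distrib, Finset.sum_const, Finset.sum_ite_mem,
            Finset.univ_inter, Finset.sum_const]
          simp [mul_comm]
  -- final arithmetic
  obtain ⟨k, rfl⟩ : ∃ k, m = k + 1 := ⟨m - 1, by omega⟩
  have hk2 : 2 ≤ k := by omega
  have hmain : (k + 1) * (S * (Nc - S)) ≤ k * n + (k + 1) * S := by
    rw [← hXcard]
    rw [hfib]
    have := hsum
    have hsimp : (k + 1 - 1) = k := by omega
    rw [hsimp] at this
    omega
  have hNS : Nc - S = 1 + k * S := by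
    have hexp : (k + 1) * S = k * S + S := by ring
    omega
  rw [hNS] at hmain
  have hexpand : (k + 1) * (S * (1 + k * S)) = (k + 1) * S + k * ((k + 1) * S ^ 2) := by ring
  rw [hexpand] at hmain
  have hfin : k * ((k + 1) * S ^ 2) ≤ k * n := by omega
  exact Nat.le_of_mul_le_mul_left hfin (by omega)

end MAry

namespace MAry
variable {m h : ℕ}

lemma colorable_R0 (hm3 : 3 ≤ m) (hh : 1 ≤ h) :
    (R0 m h).conflictGraph.Colorable (m * (∑ i ∈ Finset.range h, m ^ i) ^ 2) := by
  haveI : NeZero m := ⟨by omega⟩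
  have hc := (goodColoring (m := m) (h := h) (by omega)).colorable
  have hcard : Fintype.card (Color m h) = m * (∑ i ∈ Finset.range h, m ^ i) ^ 2 := by
    rw [Fintype.card_prod, Fintype.card_prod, ZMod.card, cardLists m (h - 1)]
    have e1 : h - 1 + 1 = h := by omega
    rw [e1, sq]
  rwa [hcard] at hc

end MAry

/-- for every odd integer `m ≥ 3` and every positive integer `h`, the
undirected optical index of the complete `m`-ary tree of height `h` equals
`m·(1 + m + m² + … + m^(h−1))²`. -/
theorem opticalIndex_mAryTree_odd (m h : ℕ) (hm : Odd m) (hm3 : 3 ≤ m) (hh : 1 ≤ h) :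
    opticalIndex (completeMAryTree m h) = m * (∑ i ∈ Finset.range h, m ^ i) ^ 2 := by
  
  have hmem : (m * (∑ i ∈ Finset.range h, m ^ i) ^ 2) ∈
      {n | ∃ R : Routing (completeMAryTree m h), R.conflictGraph.Colorable n} :=
    ⟨MAry.R0 m h, MAry.colorable_R0 hm3 hh⟩
  unfold opticalIndex
  apply le_antisymm
  · exact Nat.sInf_le hmem
  · apply le_csInf ⟨_, hmem⟩
    rintro n ⟨R, hR⟩
    exact MAry.lower_bound hm hm3 hh R n hR
end

section
/- Let k ≥ 3 be an odd integer and t a positive integer. Let G be any connected simple graph having a cut vertex r such that G − r has exactly k connected components, each containing exactly t vertices and each joined to r by exactly one edge. Then the undirected optical index of G equals k·t^2. -/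
open SimpleGraph

/-! ### Auxiliary lemmas -/

section Walks
variable {V : Type*} {G : SimpleGraph V} {r : V}

private lemma comp_const {a b : V} (W : G.Walk a b)
    (hr : ∀ x ∈ W.support, x ≠ r) (x : V) (hx : x ∈ W.support) :
    (G.induce {v | v ≠ r}).connectedComponentMk ⟨x, hr x hx⟩ =
      (G.induce {v | v ≠ r}).connectedComponentMk ⟨a, hr a W.start_mem_support⟩ := by
  induction W with
  | nil =>
    simp only [SimpleGraph.Walk.support_nil, List.mem_singleton] at hx
    subst hx; rfl
  | @cons a c b h W ih =>
    have hsup : ∀ y ∈ W.support, y ≠ r := fun y hy => hr y (by simp [hy])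
    rcases (by simpa using hx : x = a ∨ x ∈ W.support) with h1 | h2
    · subst h1; rfl
    · have hadj : (G.induce {v | v ≠ r}).Adj ⟨c, hsup c W.start_mem_support⟩
        ⟨a, hr a (Walk.start_mem_support _)⟩ := h.symm
      calc (G.induce {v | v ≠ r}).connectedComponentMk ⟨x, hr x hx⟩
          = (G.induce {v | v ≠ r}).connectedComponentMk ⟨c, hsup c W.start_mem_support⟩ :=
            ih hsup h2
        _ = _ := ConnectedComponent.connectedComponentMk_eq_of_adj hadj

private lemma comp_of_walk_from_r {b : V} (W : G.Walk r b) (hW : W.IsPath)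
    (x : V) (hx : x ∈ W.support) (hxr : x ≠ r) :
    ∃ (hb : b ≠ r),
      (G.induce {v | v ≠ r}).connectedComponentMk ⟨x, hxr⟩ =
        (G.induce {v | v ≠ r}).connectedComponentMk ⟨b, hb⟩ := by
  cases W with
  | nil =>
    simp only [Walk.support_nil, List.mem_singleton] at hx
    exact absurd hx hxr
  | @cons _ c _ h W =>
    rw [Walk.cons_isPath_iff] at hW
    have hsup : ∀ y ∈ W.support, y ≠ r := fun y hy hyr => hW.2 (hyr ▸ hy)
    have hb : b ≠ r := hsup b W.end_mem_support
    have hx' : x ∈ W.support := by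
      rcases (by simpa using hx : x = r ∨ x ∈ W.support) with h1 | h2
      · exact absurd h1 hxr
      · exact h2
    refine ⟨hb, ?_⟩
    have h1 := comp_const (r := r) W hsup x hx'
    have h2 := comp_const (r := r) W hsup b W.end_mem_support
    exact (h1.trans h2.symm)

/-- Zone lemma: every non-`r` vertex of a simple path lies in the component of one
of the endpoints. -/
private lemma zone {u v : V} (W : G.Walk u v) (hW : W.IsPath)
    (x : V) (hx : x ∈ W.support) (hxr : x ≠ r) :
    (∃ (hu : u ≠ r), (G.induce {v | v ≠ r}).connectedComponentMk ⟨x, hxr⟩ =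
        (G.induce {v | v ≠ r}).connectedComponentMk ⟨u, hu⟩) ∨
    (∃ (hv : v ≠ r), (G.induce {v | v ≠ r}).connectedComponentMk ⟨x, hxr⟩ =
        (G.induce {v | v ≠ r}).connectedComponentMk ⟨v, hv⟩) := by
  classical
  by_cases hr : r ∈ W.support
  · have hspec := W.take_spec hr
    set W1 := W.takeUntil r hr with hW1
    set W2 := W.dropUntil r hr with hW2
    have h1 : W1.IsPath := hW.takeUntil hr
    have h2 : W2.IsPath := hW.dropUntil hr
    have hx' : x ∈ W1.support ∨ x ∈ W2.support := by
      rw [← hspec] at hx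
      exact (Walk.mem_support_append_iff _ _).mp hx
    rcases hx' with hx1 | hx2
    · left
      have hu : u ≠ r := by
        rintro rfl
        rw [Walk.isPath_iff_eq_nil.mp h1] at hx1
        simp at hx1
        exact hxr hx1
      have hxrev : x ∈ W1.reverse.support := by
        rw [Walk.support_reverse, List.mem_reverse]; exact hx1
      obtain ⟨hu', heq⟩ := comp_of_walk_from_r (r := r) W1.reverse h1.reverse x hxrev hxr
      exact ⟨hu', heq⟩
    · right
      have hv : v ≠ r := by
        rintro rfl
        rw [Walk.isPath_iff_eq_nil.mp h2] at hx2
        simp at hx2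
        exact hxr hx2
      obtain ⟨hv', heq⟩ := comp_of_walk_from_r (r := r) W2 h2 x hx2 hxr
      exact ⟨hv', heq⟩
  · have hsup : ∀ y ∈ W.support, y ≠ r := fun y hy hyr => hr (hyr ▸ hy)
    left
    exact ⟨hsup u W.start_mem_support, comp_const W hsup x hx⟩

/-- Bridge lemma: a simple path between vertices in different components contains the
bridge edge on the side of its first endpoint. -/
private lemma bridge_mem {u v : V} (W : G.Walk u v) (hW : W.IsPath)
    (hu : u ≠ r) (hv : v ≠ r)
    (hcc : (G.induce {v | v ≠ r}).connectedComponentMk ⟨u, hu⟩ ≠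
      (G.induce {v | v ≠ r}).connectedComponentMk ⟨v, hv⟩) :
    ∃ (w : V) (hw : w ≠ r), G.Adj r w ∧
      (G.induce {v | v ≠ r}).connectedComponentMk ⟨w, hw⟩ =
        (G.induce {v | v ≠ r}).connectedComponentMk ⟨u, hu⟩ ∧
      s(r, w) ∈ W.edges := by
  classical
  have hr : r ∈ W.support := by
    by_contra hr
    have hsup : ∀ y ∈ W.support, y ≠ r := fun y hy hyr => hr (hyr ▸ hy)
    exact hcc (comp_const W hsup v W.end_mem_support).symm
  have hspec := W.take_spec hr
  have h1 : (W.takeUntil r hr).IsPath := hW.takeUntil hr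
  have h1r : (W.takeUntil r hr).reverse.IsPath := h1.reverse
  cases hrev : (W.takeUntil r hr).reverse with
  | nil => exact absurd rfl hu
  | @cons _ w _ hadj W'' =>
    have hWpath : (Walk.cons hadj W'').IsPath := hrev ▸ h1r
    rw [Walk.cons_isPath_iff] at hWpath
    have hsup : ∀ y ∈ W''.support, y ≠ r := fun y hy hyr => hWpath.2 (hyr ▸ hy)
    have hw : w ≠ r := hsup w W''.start_mem_support
    refine ⟨w, hw, hadj, ?_, ?_⟩
    · have := comp_const (r := r) W'' hsup u W''.end_mem_support
      exact this.symm
    · have hmem : s(r, w) ∈ (Walk.cons hadj W'').edges := by simp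
      rw [← hrev, Walk.edges_reverse, List.mem_reverse] at hmem
      have : (W.takeUntil r hr).edges ⊆ W.edges := by
        conv_rhs => rw [← hspec]
        rw [Walk.edges_append]
        exact List.subset_append_left _ _
      exact this hmem

end Walks

private lemma routing_nonempty {V : Type*} [Fintype V] {G : SimpleGraph V}
    (hG : G.Connected) : Nonempty (Routing G) := by
  classical
  let e := Fintype.equivFin V
  have base : ∀ u v : V, G.Path u v := fun u v => ((hG.preconnected u v).some).toPath
  refine ⟨⟨fun u v => if (e u : ℕ) ≤ e v then (base u v).val else (base v u).val.reverse,
    ?_, ?_⟩⟩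
  · intro u v
    by_cases h : (e u : ℕ) ≤ e v
    · rw [if_pos h]; exact (base u v).prop
    · rw [if_neg h]; exact (base v u).prop.reverse
  · intro u v
    by_cases h1 : (e u : ℕ) ≤ e v <;> by_cases h2 : (e v : ℕ) ≤ e u
    · have huv : u = v := e.injective (Fin.ext (le_antisymm h1 h2))
      subst huv
      rw [if_pos h1]
      have : (base u u).val = Walk.nil :=
        SimpleGraph.Walk.isPath_iff_eq_nil.mp (base u u).prop
      rw [this]
      rfl
    · rw [if_pos h1, if_neg h2]
    · rw [if_neg h1, if_pos h2, Walk.reverse_reverse]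
    · exact absurd (le_of_not_ge h1) h2

private lemma even_card_of_invol {α : Type*} [DecidableEq α] (s : Finset α) (σ : α → α)
    (hmem : ∀ a ∈ s, σ a ∈ s) (hinv : ∀ a ∈ s, σ (σ a) = a) (hfix : ∀ a ∈ s, σ a ≠ a) :
    Even s.card := by
  induction s using Finset.strongInduction with
  | _ s ih =>
    rcases Finset.eq_empty_or_nonempty s with rfl | ⟨a, ha⟩
    · simp
    · have hσa : σ a ∈ s.erase a := Finset.mem_erase.mpr ⟨hfix a ha, hmem a ha⟩
      set u : Finset α := (s.erase a).erase (σ a) with hu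
      have husub : u ⊂ s := by
        refine Finset.ssubset_of_subset_of_ssubset ?_ (Finset.erase_ssubset ha)
        exact Finset.erase_subset _ _
      have hmemu : ∀ b ∈ u, b ∈ s ∧ b ≠ a ∧ b ≠ σ a := by
        intro b hb
        rw [hu, Finset.mem_erase, Finset.mem_erase] at hb
        exact ⟨hb.2.2, hb.2.1, hb.1⟩
      have h1 : ∀ b ∈ u, σ b ∈ u := by
        intro b hb
        obtain ⟨hbs, hba, hbsa⟩ := hmemu b hb
        rw [hu, Finset.mem_erase, Finset.mem_erase]
        refine ⟨?_, ?_, hmem b hbs⟩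
        · intro h
          exact hba (by rw [← hinv b hbs, h, hinv a ha])
        · intro h
          exact hbsa (by rw [← hinv b hbs, h])
      have heven : Even u.card := by
        refine ih u husub (fun b hb => h1 b hb) ?_ ?_
        · intro b hb
          exact hinv b (hmemu b hb).1
        · intro b hb
          exact hfix b (hmemu b hb).1
      have hcard : s.card = u.card + 2 := by
        have c1 : (s.erase a).card = s.card - 1 := Finset.card_erase_of_mem ha
        have c2 : u.card = (s.erase a).card - 1 := Finset.card_erase_of_mem hσa
        have p1 : 1 ≤ s.card := Finset.card_pos.mpr ⟨a, ha⟩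
        have p2 : 1 ≤ (s.erase a).card := Finset.card_pos.mpr ⟨σ a, hσa⟩
        omega
      rw [hcard]
      exact heven.add (by decide)

private lemma min_eq_max_imp {α : Type*} [LinearOrder α] {a b : α}
    (h : min a b = max a b) : a = b := by
  have h1 : a ≤ b := le_trans (le_trans (le_max_left a b) (le_of_eq h.symm)) (min_le_right a b)
  have h2 : b ≤ a := le_trans (le_trans (le_max_right a b) (le_of_eq h.symm)) (min_le_left a b)
  exact le_antisymm h1 h2

section Color
variable {V : Type*} {C : Type*} {k t : ℕ} [NeZero k] [NeZero t]

/-- Abstract coloring function on ordered pairs of vertices. -/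
private def colf (r : V) (cmp : V → C) (zz : C → ZMod k) (rk : V → Fin t)
    (ord : C → Fin k) [DecidableEq V] [DecidableEq C] : V → V → ZMod k × Fin t × Fin t :=
  fun u v =>
    if u = r then
      if v = r then (0, 0, 0)
      else (zz (cmp v) + zz (cmp v), rk v, rk v)
    else if v = r then (zz (cmp u) + zz (cmp u), rk u, rk u)
    else if cmp u = cmp v then
      (zz (cmp u) + zz (cmp u), min (rk u) (rk v), max (rk u) (rk v))
    else (zz (cmp u) + zz (cmp v),
      if ord (cmp u) < ord (cmp v) then (rk u, rk v) else (rk v, rk u))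

variable {r : V} {cmp : V → C} {zz : C → ZMod k} {rk : V → Fin t} {ord : C → Fin k}
  [DecidableEq V] [DecidableEq C]

set_option linter.unusedSectionVars false

private lemma colf_symm (hord : Function.Injective ord) (u v : V) :
    colf r cmp zz rk ord u v = colf r cmp zz rk ord v u := by
  unfold colf
  by_cases hu : u = r <;> by_cases hv : v = r <;> simp [hu, hv]
  by_cases hc : cmp u = cmp v
  · simp [hc, min_comm, max_comm]
  · have hc' : ¬ cmp v = cmp u := fun h => hc h.symm
    simp only [if_neg hc, if_neg hc']
    have hne : ord (cmp u) ≠ ord (cmp v) := fun h => hc (hord h)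
    rcases lt_or_gt_of_ne hne with h | h
    · rw [if_pos h, if_neg (not_lt.mpr h.le), add_comm]
    · rw [if_neg (not_lt.mpr h.le), if_pos h, add_comm]

private lemma colf_key
    (hzz : Function.Injective zz)
    (hrk : ∀ a b, a ≠ r → b ≠ r → cmp a = cmp b → rk a = rk b → a = b)
    (u v u' v' : V) (huv : u ≠ v) (huv' : u' ≠ v') (hu : u ≠ r) (hu' : u' ≠ r)
    (hcc : cmp u = cmp u')
    (hcol : colf r cmp zz rk ord u v = colf r cmp zz rk ord u' v') :
    s(u, v) = s(u', v') := by
  unfold colf at hcol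
  rw [if_neg hu, if_neg hu'] at hcol
  by_cases hv : v = r <;> by_cases hv' : v' = r
  · rw [if_pos hv, if_pos hv'] at hcol
    simp only [Prod.mk.injEq] at hcol
    rw [hrk u u' hu hu' hcc hcol.2.1, hv, hv']
  · rw [if_pos hv, if_neg hv'] at hcol
    by_cases hc' : cmp u' = cmp v'
    · rw [if_pos hc'] at hcol
      simp only [Prod.mk.injEq] at hcol
      have hne : rk u' ≠ rk v' := fun h => huv' (hrk u' v' hu' hv' hc' h)
      exact absurd (min_eq_max_imp (hcol.2.1.symm.trans hcol.2.2)) hne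
    · rw [if_neg hc'] at hcol
      simp only [Prod.mk.injEq] at hcol
      have h1 := hcol.1
      rw [hcc] at h1
      exact absurd (hzz (add_left_cancel h1)) hc'
  · rw [if_neg hv, if_pos hv'] at hcol
    by_cases hc : cmp u = cmp v
    · rw [if_pos hc] at hcol
      simp only [Prod.mk.injEq] at hcol
      have hne : rk u ≠ rk v := fun h => huv (hrk u v hu hv hc h)
      exact absurd (min_eq_max_imp (hcol.2.1.trans hcol.2.2.symm)) hne
    · rw [if_neg hc] at hcol
      simp only [Prod.mk.injEq] at hcol
      have h1 := hcol.1
      rw [← hcc] at h1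
      exact absurd (hzz (add_left_cancel h1)).symm hc
  · rw [if_neg hv, if_neg hv'] at hcol
    by_cases hc : cmp u = cmp v <;> by_cases hc' : cmp u' = cmp v'
    · rw [if_pos hc, if_pos hc'] at hcol
      simp only [Prod.mk.injEq] at hcol
      obtain ⟨h1, hmin, hmax⟩ := hcol
      have hcv : cmp v = cmp v' := by rw [← hc, hcc, hc']
      have hset : (rk u = rk u' ∧ rk v = rk v') ∨ (rk u = rk v' ∧ rk v = rk u') := by
        rcases le_total (rk u) (rk v) with h | h <;>
          rcases le_total (rk u') (rk v') with h' | h'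
        · left
          exact ⟨by rwa [min_eq_left h, min_eq_left h'] at hmin,
            by rwa [max_eq_right h, max_eq_right h'] at hmax⟩
        · right
          exact ⟨by rwa [min_eq_left h, min_eq_right h'] at hmin,
            by rwa [max_eq_right h, max_eq_left h'] at hmax⟩
        · right
          exact ⟨by rwa [max_eq_left h, max_eq_right h'] at hmax,
            by rwa [min_eq_right h, min_eq_left h'] at hmin⟩
        · left
          exact ⟨by rwa [max_eq_left h, max_eq_left h'] at hmax,
            by rwa [min_eq_right h, min_eq_right h'] at hmin⟩
      rcases hset with ⟨ha, hb⟩ | ⟨ha, hb⟩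
      · rw [hrk u u' hu hu' hcc ha, hrk v v' hv hv' hcv hb]
      · rw [hrk u v' hu hv' (hcc.trans hc') ha, hrk v u' hv hu' (hc.symm.trans hcc) hb,
          Sym2.eq_swap]
    · rw [if_pos hc, if_neg hc'] at hcol
      simp only [Prod.mk.injEq] at hcol
      have h1 := hcol.1
      rw [hcc] at h1
      exact absurd (hzz (add_left_cancel h1)) hc'
    · rw [if_neg hc, if_pos hc'] at hcol
      simp only [Prod.mk.injEq] at hcol
      have h1 := hcol.1
      rw [← hcc] at h1
      exact absurd (hzz (add_left_cancel h1)).symm hc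
    · rw [if_neg hc, if_neg hc'] at hcol
      simp only [Prod.mk.injEq] at hcol
      obtain ⟨h1, h2⟩ := hcol
      rw [hcc] at h1
      have hcv : cmp v = cmp v' := hzz (add_left_cancel h1)
      rw [← hcc, ← hcv] at h2
      by_cases hlt : ord (cmp u) < ord (cmp v)
      · rw [if_pos hlt, if_pos hlt] at h2
        simp only [Prod.mk.injEq] at h2
        rw [hrk u u' hu hu' hcc h2.1, hrk v v' hv hv' hcv h2.2]
      · rw [if_neg hlt, if_neg hlt] at h2
        simp only [Prod.mk.injEq] at h2
        rw [hrk u u' hu hu' hcc h2.2, hrk v v' hv hv' hcv h2.1]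

end Color

/-- if `k ≥ 3` is odd, `t ≥ 1`, and `G` is a connected simple graph with a
cut vertex `r` such that `G − r` has exactly `k` connected components, each with exactly
`t` vertices and each joined to `r` by exactly one edge, then `w(G) = k·t²`. -/
theorem opticalIndex_G_kt {V : Type*} [Fintype V] (G : SimpleGraph V) (hG : G.Connected)
    (k t : ℕ) (hk : 3 ≤ k) (hkodd : Odd k) (ht : 1 ≤ t) (r : V)
    (hcomp : Nat.card (G.induce {v | v ≠ r}).ConnectedComponent = k)
    (hsize : ∀ c : (G.induce {v | v ≠ r}).ConnectedComponent, Nat.card c.supp = t)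
    (hedge : ∀ c : (G.induce {v | v ≠ r}).ConnectedComponent,
      Nat.card {v : {v : V // v ≠ r} | v ∈ c.supp ∧ G.Adj r v.val} = 1) :
    opticalIndex G = k * t ^ 2 := by
  classical
  haveI : NeZero k := ⟨by omega⟩
  haveI : NeZero t := ⟨by omega⟩
  -- notation
  set GC := G.induce {v : V | v ≠ r} with hGCdef
  haveI : Fintype GC.ConnectedComponent := Fintype.ofFinite _
  haveI : ∀ c : GC.ConnectedComponent, Fintype c.supp := fun c => Fintype.ofFinite _
  -- an enumeration of the components
  obtain ⟨idx⟩ : Nonempty (GC.ConnectedComponent ≃ Fin k) :=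
    ⟨Fintype.equivFinOfCardEq (by rw [← Nat.card_eq_fintype_card]; exact hcomp)⟩
  -- a rank function, injective on each component
  obtain ⟨rk, hrkinj⟩ : ∃ rk : {v : V // v ≠ r} → Fin t,
      ∀ a b : {v : V // v ≠ r}, GC.connectedComponentMk a = GC.connectedComponentMk b →
        rk a = rk b → a = b := by
    have eqv : ∀ c : GC.ConnectedComponent, c.supp ≃ Fin t := fun c =>
      Fintype.equivFinOfCardEq (by rw [← Nat.card_eq_fintype_card]; exact hsize c)
    have hmem : ∀ a : {v : V // v ≠ r}, a ∈ (GC.connectedComponentMk a).supp := fun a => rfl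
    refine ⟨fun a => eqv (GC.connectedComponentMk a) ⟨a, hmem a⟩, ?_⟩
    intro a b h hr
    have gen : ∀ (c : GC.ConnectedComponent) (h' : GC.connectedComponentMk b = c),
        eqv (GC.connectedComponentMk b) ⟨b, hmem b⟩ = eqv c ⟨b, h'⟩ := by
      intro c h'
      subst h'
      rfl
    dsimp only at hr
    rw [gen (GC.connectedComponentMk a) h.symm] at hr
    have := (eqv (GC.connectedComponentMk a)).injective hr
    exact congrArg Subtype.val this
  -- the gateway of each component
  obtain ⟨gate, hgate⟩ : ∃ gate : GC.ConnectedComponent → {v : V // v ≠ r},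
      ∀ c, (gate c ∈ c.supp ∧ G.Adj r (gate c).val) ∧
        ∀ w : {v : V // v ≠ r}, w ∈ c.supp → G.Adj r w.val → w = gate c := by
    have h1 : ∀ c : GC.ConnectedComponent,
        ∃ x : {v : {v : V // v ≠ r} | v ∈ c.supp ∧ G.Adj r v.val}, ∀ y, y = x :=
      fun c => Nat.card_eq_one_iff_exists.mp (hedge c)
    choose x hx using h1
    exact ⟨fun c => (x c).val, fun c => ⟨(x c).prop,
      fun w hw ha => congrArg Subtype.val (hx c ⟨w, hw, ha⟩)⟩⟩
  -- the total component and rank functions on V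
  set cmp : V → GC.ConnectedComponent :=
    fun v => if h : v = r then idx.symm 0 else GC.connectedComponentMk ⟨v, h⟩ with hcmpdef
  have hcmp_ne : ∀ (v : V) (h : v ≠ r), cmp v = GC.connectedComponentMk ⟨v, h⟩ :=
    fun v h => dif_neg h
  set rkV : V → Fin t := fun v => if h : v = r then 0 else rk ⟨v, h⟩ with hrkVdef
  have hrkV_ne : ∀ (v : V) (h : v ≠ r), rkV v = rk ⟨v, h⟩ := fun v h => dif_neg h
  set zz : GC.ConnectedComponent → ZMod k := fun c => ((idx c : ℕ) : ZMod k) with hzzdef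
  have hzz : Function.Injective zz := by
    intro c c' h
    apply idx.injective
    apply Fin.ext
    have := congrArg ZMod.val h
    rwa [hzzdef, ZMod.val_cast_of_lt (idx c).isLt, ZMod.val_cast_of_lt (idx c').isLt] at this
  have hrkV : ∀ a b : V, a ≠ r → b ≠ r → cmp a = cmp b → rkV a = rkV b → a = b := by
    intro a b ha hb hcab hrab
    rw [hcmp_ne a ha, hcmp_ne b hb] at hcab
    rw [hrkV_ne a ha, hrkV_ne b hb] at hrab
    exact congrArg Subtype.val (hrkinj _ _ hcab hrab)
  -- membership of the target value in the defining set
  obtain ⟨R⟩ := routing_nonempty hG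
  have hupper : ∃ R : Routing G, R.conflictGraph.Colorable (k * t ^ 2) := by
    refine ⟨R, ?_⟩
    have hsym : ∀ u v : V, colf r cmp zz rkV (⇑idx) u v = colf r cmp zz rkV (⇑idx) v u :=
      colf_symm idx.injective
    set F : {p : Sym2 V // ¬ p.IsDiag} → ZMod k × Fin t × Fin t :=
      fun p => Sym2.lift ⟨colf r cmp zz rkV (⇑idx), hsym⟩ p.val with hFdef
    have hvalid : ∀ p q, R.conflictGraph.Adj p q → F p ≠ F q := by
      intro p q hadj hFeq
      obtain ⟨hne, u, v, u', v', e, hp, hq, he1, he2⟩ := hadj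
      have hnduv : u ≠ v := by
        have := p.prop
        rw [hp] at this
        simpa [Sym2.mk_isDiag_iff] using this
      have hnduv' : u' ≠ v' := by
        have := q.prop
        rw [hq] at this
        simpa [Sym2.mk_isDiag_iff] using this
      rw [hFdef] at hFeq
      simp only [hp, hq, Sym2.lift_mk] at hFeq
      -- the shared edge and a non-r endpoint of it
      have heE : e ∈ G.edgeSet := (R.path u v).edges_subset_edgeSet he1
      obtain ⟨z, hz, hzm1, hzm2⟩ : ∃ z, z ≠ r ∧ z ∈ (R.path u v).support ∧
          z ∈ (R.path u' v').support := by
        revert heE he1 he2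
        refine Sym2.ind (fun x y => ?_) e
        intro he1 he2 heE
        have hxy : G.Adj x y := heE
        by_cases hx : x = r
        · refine ⟨y, fun h => hxy.ne (hx.trans h.symm), ?_, ?_⟩
          · exact Walk.snd_mem_support_of_mem_edges _ he1
          · exact Walk.snd_mem_support_of_mem_edges _ he2
        · refine ⟨x, hx, ?_, ?_⟩
          · exact Walk.fst_mem_support_of_mem_edges _ he1
          · exact Walk.fst_mem_support_of_mem_edges _ he2
      have hz1 := zone (r := r) (R.path u v) (R.isPath u v) z hzm1 hz
      have hz2 := zone (r := r) (R.path u' v') (R.isPath u' v') z hzm2 hz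
      -- a common helper closing the goal
      have main : ∀ a b a' b' : V, a ≠ b → a' ≠ b' →
          colf r cmp zz rkV (⇑idx) a b = colf r cmp zz rkV (⇑idx) a' b' →
          (∃ ha : a ≠ r, GC.connectedComponentMk ⟨z, hz⟩ = GC.connectedComponentMk ⟨a, ha⟩) →
          (∃ ha' : a' ≠ r, GC.connectedComponentMk ⟨z, hz⟩ =
            GC.connectedComponentMk ⟨a', ha'⟩) →
          s(a, b) = s(a', b') := by
        rintro a b a' b' hab hab' hcoleq ⟨ha, hza⟩ ⟨ha', hza'⟩
        refine colf_key hzz hrkV a b a' b' hab hab' ha ha' ?_ hcoleq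
        rw [hcmp_ne a ha, hcmp_ne a' ha']
        exact hza.symm.trans hza'
      apply hne
      apply Subtype.ext
      rw [hp, hq]
      rcases hz1 with h1 | h1 <;> rcases hz2 with h2 | h2
      · exact main u v u' v' hnduv hnduv' hFeq h1 h2
      · have := main u v v' u' hnduv hnduv'.symm (hFeq.trans (hsym u' v')) h1 h2
        rw [this, Sym2.eq_swap]
      · have := main v u u' v' hnduv.symm hnduv' ((hsym v u).trans hFeq) h1 h2
        rw [← this, Sym2.eq_swap]
      · have := main v u v' u' hnduv.symm hnduv'.symm
          (((hsym v u).trans hFeq).trans (hsym u' v')) h1 h2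
        rw [Sym2.eq_swap, this, Sym2.eq_swap]
    have hcoloring : R.conflictGraph.Coloring (ZMod k × Fin t × Fin t) :=
      Coloring.mk F (fun {p q} h => hvalid p q h)
    have hcard : Fintype.card (ZMod k × Fin t × Fin t) = k * t ^ 2 := by
      simp [ZMod.card, pow_two, mul_assoc]
    exact hcard ▸ hcoloring.colorable
  -- lower bound
  have hlower : ∀ n ∈ {n | ∃ R : Routing G, R.conflictGraph.Colorable n}, k * t ^ 2 ≤ n := by
    rintro n ⟨R, hcol⟩
    obtain ⟨C⟩ := hcol
    -- counting setup
    set mkc : {v : V // v ≠ r} → GC.ConnectedComponent :=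
      fun v => GC.connectedComponentMk v with hmkcdef
    -- a junk pair
    obtain ⟨v0⟩ : Nonempty ((idx.symm 0).supp) := by
      have : 0 < Nat.card ((idx.symm 0).supp) := by rw [hsize]; omega
      exact (Nat.card_pos_iff.mp this).1
    have hp0 : ¬ (s(r, v0.val.val) : Sym2 V).IsDiag := by
      rw [Sym2.mk_isDiag_iff]
      exact fun h => v0.val.prop h.symm
    set p0 : {p : Sym2 V // ¬ p.IsDiag} := ⟨s(r, v0.val.val), hp0⟩ with hp0def
    set col2 : Sym2 V → Fin n :=
      fun s => if h : ¬ s.IsDiag then C ⟨s, h⟩ else C p0 with hcol2def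
    set color' : {v : V // v ≠ r} × {v : V // v ≠ r} → Fin n :=
      fun p => col2 s(p.1.val, p.2.val) with hcolor'def
    set O : Finset ({v : V // v ≠ r} × {v : V // v ≠ r}) :=
      Finset.univ.filter (fun p => mkc p.1 ≠ mkc p.2) with hOdef
    -- each fiber of each vertex has t elements
    have hfibt : ∀ c : GC.ConnectedComponent,
        (Finset.univ.filter (fun v : {v : V // v ≠ r} => mkc v = c)).card = t := by
      intro c
      rw [← Fintype.card_subtype]
      rw [← Nat.card_eq_fintype_card]
      rw [← hsize c]
      exact Nat.card_congr (Equiv.subtypeEquivRight (fun v => by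
        rw [ConnectedComponent.mem_supp_iff]))
    have hcardV' : Fintype.card {v : V // v ≠ r} = k * t := by
      rw [Finset.card_univ.symm,
        Finset.card_eq_sum_card_fiberwise (f := mkc) (t := Finset.univ)
          (fun x _ => Finset.mem_univ _)]
      rw [Finset.sum_congr rfl (fun c _ => hfibt c), Finset.sum_const, Finset.card_univ,
        ← Nat.card_eq_fintype_card, hcomp, smul_eq_mul]
    -- cardinality of O
    have hOcard : O.card = (k * t) * (k * t - t) := by
      rw [hOdef, Finset.card_eq_sum_card_fiberwise (f := Prod.fst) (t := Finset.univ)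
        (fun x _ => Finset.mem_univ _)]
      have hfiber : ∀ u : {v : V // v ≠ r},
          ((Finset.univ.filter
              (fun p : {v : V // v ≠ r} × {v : V // v ≠ r} => mkc p.1 ≠ mkc p.2)).filter
            (fun p => p.1 = u)).card = k * t - t := by
        intro u
        have hbij : ((Finset.univ.filter
              (fun p : {v : V // v ≠ r} × {v : V // v ≠ r} => mkc p.1 ≠ mkc p.2)).filter
            (fun p => p.1 = u)).card =
            (Finset.univ.filter (fun v : {v : V // v ≠ r} => mkc v ≠ mkc u)).card := by
          apply Finset.card_bij (fun p _ => p.2)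
          · intro p hp
            simp only [Finset.mem_filter, Finset.mem_univ, true_and] at hp ⊢
            rw [← hp.2]
            exact fun h => hp.1 h.symm
          · intro p hp q hq hpq
            simp only [Finset.mem_filter, Finset.mem_univ, true_and] at hp hq
            exact Prod.ext (hp.2.trans hq.2.symm) hpq
          · intro v hv
            simp only [Finset.mem_filter, Finset.mem_univ, true_and] at hv
            refine ⟨(u, v), ?_, rfl⟩
            simp only [Finset.mem_filter, Finset.mem_univ, true_and]
            exact ⟨fun h => hv h.symm, trivial⟩
        rw [hbij]
        have := Finset.card_filter_add_card_filter_not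
          (s := (Finset.univ : Finset {v : V // v ≠ r}))
          (p := fun v => mkc v = mkc u)
        have h2 : (Finset.univ.filter (fun v : {v : V // v ≠ r} => mkc v = mkc u)).card
            = t := hfibt (mkc u)
        have h3 : (Finset.univ : Finset {v : V // v ≠ r}).card = k * t := by
          rw [Finset.card_univ, hcardV']
        have h4 : (Finset.univ.filter (fun v : {v : V // v ≠ r} => ¬ mkc v = mkc u)).card
            = k * t - t := by omega
        rw [← h4]
      rw [Finset.sum_congr rfl (fun u _ => hfiber u), Finset.sum_const, Finset.card_univ,
        hcardV', smul_eq_mul]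
    -- decompose O by color
    have hOsum : O.card = ∑ i : Fin n,
        (O.filter (fun p => color' p = i)).card :=
      Finset.card_eq_sum_card_fiberwise (fun x _ => Finset.mem_univ _)
    -- each color class is small
    have hclass : ∀ i : Fin n, (O.filter (fun p => color' p = i)).card ≤ k - 1 := by
      intro i
      set Fi := O.filter (fun p => color' p = i) with hFidef
      -- basic membership facts
      have hmemFi : ∀ p ∈ Fi, mkc p.1 ≠ mkc p.2 ∧ color' p = i := by
        intro p hp
        rw [hFidef, Finset.mem_filter, hOdef, Finset.mem_filter] at hp
        exact ⟨hp.1.2, hp.2⟩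
      -- injectivity of the first-side component on Fi
      have hinj : Set.InjOn (fun p : {v : V // v ≠ r} × {v : V // v ≠ r} => mkc p.1)
          (Fi : Set ({v : V // v ≠ r} × {v : V // v ≠ r})) := by
        intro p hp q hq hpq0
        have hpq : mkc p.1 = mkc q.1 := hpq0
        obtain ⟨hOp, hcp⟩ := hmemFi p (by exact hp)
        obtain ⟨hOq, hcq⟩ := hmemFi q (by exact hq)
        have hpne : p.1.val ≠ p.2.val := fun h => hOp (congrArg mkc (Subtype.ext h))
        have hqne : q.1.val ≠ q.2.val := fun h => hOq (congrArg mkc (Subtype.ext h))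
        -- bridges
        obtain ⟨w, hw, hadjw, hcw, hew⟩ := bridge_mem (r := r)
          (R.path p.1.val p.2.val) (R.isPath _ _) p.1.prop p.2.prop hOp
        obtain ⟨w', hw', hadjw', hcw', hew'⟩ := bridge_mem (r := r)
          (R.path q.1.val q.2.val) (R.isPath _ _) q.1.prop q.2.prop hOq
        -- the two bridge vertices agree
        have hwmem : (⟨w, hw⟩ : {v : V // v ≠ r}) ∈ (mkc p.1).supp := by
          rw [ConnectedComponent.mem_supp_iff]
          exact hcw
        have hwmem' : (⟨w', hw'⟩ : {v : V // v ≠ r}) ∈ (mkc p.1).supp := by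
          rw [ConnectedComponent.mem_supp_iff]
          exact hcw'.trans hpq.symm
        have hww' : w = w' := by
          have e1 := (hgate (mkc p.1)).2 ⟨w, hw⟩ hwmem hadjw
          have e2 := (hgate (mkc p.1)).2 ⟨w', hw'⟩ hwmem' hadjw'
          exact congrArg Subtype.val (e1.trans e2.symm)
        -- if the two pairs are distinct they conflict, contradiction
        have hsym2 : s(p.1.val, p.2.val) = s(q.1.val, q.2.val) := by
          by_contra hne2
          have hndp : ¬ (s(p.1.val, p.2.val) : Sym2 V).IsDiag := by
            rw [Sym2.mk_isDiag_iff]; exact hpne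
          have hndq : ¬ (s(q.1.val, q.2.val) : Sym2 V).IsDiag := by
            rw [Sym2.mk_isDiag_iff]; exact hqne
          have hadjpq : R.conflictGraph.Adj ⟨_, hndp⟩ ⟨_, hndq⟩ := by
            refine ⟨fun h => hne2 (congrArg Subtype.val h),
              p.1.val, p.2.val, q.1.val, q.2.val, s(r, w), rfl, rfl, hew, ?_⟩
            rw [hww']
            exact hew'
          have := C.valid hadjpq
          apply this
          have hc1 : C ⟨_, hndp⟩ = color' p := by
            rw [hcolor'def, hcol2def]
            simp only [dif_pos hndp]
          have hc2 : C ⟨_, hndq⟩ = color' q := by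
            rw [hcolor'def, hcol2def]
            simp only [dif_pos hndq]
          rw [hc1, hc2, hcp, hcq]
        -- conclude equality of the ordered pairs
        rcases Sym2.eq_iff.mp hsym2 with ⟨h1, h2⟩ | ⟨h1, h2⟩
        · exact Prod.ext (Subtype.ext h1) (Subtype.ext h2)
        · exact absurd (hpq.trans (congrArg mkc (Subtype.ext h2)).symm) hOp
      have hle : Fi.card ≤ k := by
        have := Finset.card_le_card_of_injOn
          (fun p : {v : V // v ≠ r} × {v : V // v ≠ r} => mkc p.1)
          (fun p _ => Finset.mem_univ _) hinj
        rwa [Finset.card_univ, ← Nat.card_eq_fintype_card, hcomp] at this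
      have heven : Even Fi.card := by
        apply even_card_of_invol Fi (fun p => (p.2, p.1))
        · intro p hp
          obtain ⟨hOp, hcp⟩ := hmemFi p hp
          rw [hFidef, Finset.mem_filter, hOdef, Finset.mem_filter]
          refine ⟨⟨Finset.mem_univ _, fun h => hOp h.symm⟩, ?_⟩
          rw [← hcp, hcolor'def]
          exact congrArg col2 (Sym2.eq_swap)
        · intro p _
          rfl
        · intro p hp h
          obtain ⟨hOp, _⟩ := hmemFi p hp
          exact hOp (congrArg mkc (congrArg Prod.fst h)).symm
      obtain ⟨m, hm⟩ := heven
      obtain ⟨j, hj⟩ := hkodd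
      omega
    -- put everything together
    have hbound : O.card ≤ n * (k - 1) := by
      rw [hOsum]
      calc ∑ i : Fin n, (O.filter (fun p => color' p = i)).card
          ≤ ∑ _i : Fin n, (k - 1) := Finset.sum_le_sum (fun i _ => hclass i)
        _ = n * (k - 1) := by rw [Finset.sum_const, Finset.card_univ, Fintype.card_fin,
            smul_eq_mul]
    rw [hOcard] at hbound
    have harith : (k * t) * (k * t - t) = (k * t ^ 2) * (k - 1) := by
      obtain ⟨k', rfl⟩ : ∃ k', k = k' + 1 := ⟨k - 1, by omega⟩
      rw [Nat.add_sub_cancel, Nat.succ_mul, Nat.add_sub_cancel, pow_two]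
      ring
    rw [harith] at hbound
    have hkpos : 0 < k - 1 := by omega
    exact Nat.le_of_mul_le_mul_right hbound hkpos
  -- conclusion
  unfold opticalIndex
  apply le_antisymm
  · exact Nat.sInf_le hupper
  · exact le_csInf ⟨k * t ^ 2, hupper⟩ hlower
end

section
/- For every even integer m ≥ 4 and every integer h ≥ 1, the undirected optical index of the tree D_{m,h}, obtained from two disjoint copies of the complete m-ary tree of height h−1 by joining their two roots with an edge, is at most (1 + m + m^2 + … + m^{h−1})^2. -/
open SimpleGraph

namespace OptIdxAux
open List

variable {m : ℕ}

/-- Length of the longest common prefix of two lists. -/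
def cp : List (Fin m) → List (Fin m) → ℕ
  | a :: l, b :: l' => if a = b then cp l l' + 1 else 0
  | _, _ => 0

@[simp] lemma cp_nil_left (l : List (Fin m)) : cp [] l = 0 := by cases l <;> rfl
@[simp] lemma cp_nil_right (l : List (Fin m)) : cp l [] = 0 := by cases l <;> rfl

lemma cp_comm : ∀ (x y : List (Fin m)), cp x y = cp y x
  | [], y => by simp
  | x, [] => by simp
  | a :: l, b :: l' => by
    simp only [cp]
    rcases eq_or_ne a b with h | h
    · simp [h, cp_comm l l']
    · simp [h, Ne.symm h]

lemma cp_le_length_left : ∀ (x y : List (Fin m)), cp x y ≤ x.length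
  | [], y => by simp
  | x, [] => by simp
  | a :: l, b :: l' => by
    simp only [cp]
    split
    · simpa using cp_le_length_left l l'
    · simp

lemma cp_le_length_right (x y : List (Fin m)) : cp x y ≤ y.length := by
  rw [cp_comm]; exact cp_le_length_left y x

lemma take_cp : ∀ (x y : List (Fin m)), x.take (cp x y) = y.take (cp x y)
  | [], y => by simp
  | x, [] => by simp
  | a :: l, b :: l' => by
    simp only [cp]
    split
    · next h => simp [h, take_cp l l']
    · simp

lemma getElem?_cp_ne : ∀ (x y : List (Fin m)) (c : Fin m),
    x[cp x y]? = some c → y[cp x y]? ≠ some c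
  | [], y, c => by simp
  | a :: l, [], c => by simp
  | a :: l, b :: l', c => by
    simp only [cp]
    split
    · next h => simpa using getElem?_cp_ne l l' c
    · next h =>
      simp only [getElem?_cons_zero, Option.some.injEq]
      rintro rfl h2
      exact h (Option.some_injective _ h2.symm)

lemma cp_of_prefix {x y : List (Fin m)} (h : x <+: y) : cp x y = x.length := by
  induction x generalizing y with
  | nil => simp
  | cons a l ih =>
    rcases y with _ | ⟨b, l'⟩
    · simpa using h.length_le
    · obtain ⟨hb, hl⟩ : a = b ∧ l <+: l' := by
        obtain ⟨t, ht⟩ := h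
        injection ht with h1 h2
        exact ⟨h1, ⟨t, h2⟩⟩
      simp [cp, hb, ih hl]

lemma cp_lt_of_not_prefix {x y : List (Fin m)} (h : ¬ x <+: y) : cp x y < x.length := by
  rcases lt_or_eq_of_le (cp_le_length_left x y) with h' | h'
  · exact h'
  · exfalso
    apply h
    have : x.take (cp x y) = x := by rw [h']; exact take_length
    rw [← this, take_cp]
    exact take_prefix _ _

lemma cp_eq_of : ∀ (n : ℕ) (x y : List (Fin m)), n ≤ x.length →
    x.take n = y.take n → (∀ c, x[n]? = some c → y[n]? ≠ some c) → cp x y = n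
  | 0, x, y, hn, ht, hg => by
    rcases x with _ | ⟨a, l⟩
    · simp
    rcases y with _ | ⟨b, l'⟩
    · simp
    have : a ≠ b := by
      intro h
      exact hg a (by simp) (by simp [h])
    simp [cp, this]
  | n + 1, x, y, hn, ht, hg => by
    rcases x with _ | ⟨a, l⟩
    · simp at hn
    rcases y with _ | ⟨b, l'⟩
    · simp at ht
    simp only [take_succ_cons, cons.injEq] at ht
    have : cp l l' = n := cp_eq_of n l l' (by simpa using hn) ht.2 (by
      intro c hc
      simpa using hg c (by simpa using hc))
    simp [cp, ht.1, this]

section Sig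
variable [NeZero m]

/-- A "derangement-like" letter substitution: avoids the input and the optional forbidden letter. -/
def sig : Option (Fin m) → Fin m → Fin m
  | none, c => c + 1
  | some d, c => if c + 1 = d then c + 1 + 1 else c + 1

lemma one_ne_zero' (hm : 4 ≤ m) : (1 : Fin m) ≠ 0 := by
  simp [Fin.ext_iff, Fin.val_one', Nat.mod_eq_of_lt (by omega : 1 < m)]

lemma two_ne_zero' (hm : 4 ≤ m) : (1 + 1 : Fin m) ≠ 0 := by
  have : ((1 + 1 : Fin m) : ℕ) = 2 := by
    simp [Fin.val_add, Fin.val_one', Nat.mod_eq_of_lt (by omega : 1 < m),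
      Nat.mod_eq_of_lt (by omega : 2 < m)]
  intro h
  rw [h] at this
  simp at this

lemma sig_ne_self (hm : 4 ≤ m) (o : Option (Fin m)) (c : Fin m) : sig o c ≠ c := by
  rcases o with _ | d
  · simp only [sig]
    intro h
    exact one_ne_zero' hm (by
      have := congrArg (· - c) h
      simpa [add_comm, add_sub_cancel_right] using this)
  · simp only [sig]
    split
    · intro h
      apply two_ne_zero' hm
      have h2 : c + (1 + 1) = c + 0 := by rw [← add_assoc, h, add_zero]
      exact add_left_cancel h2
    · intro h
      exact one_ne_zero' hm (by
        have := congrArg (· - c) h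
        simpa [add_comm, add_sub_cancel_right] using this)

lemma sig_ne_some (hm : 4 ≤ m) (d : Fin m) (c : Fin m) : sig (some d) c ≠ d := by
  simp only [sig]
  split
  · next h =>
    intro h2
    rw [← h2] at h
    exact one_ne_zero' hm (by
      have := congrArg (· - (c+1)) h
      simpa [add_assoc, add_comm, add_sub_cancel_right] using this)
  · next h => exact fun h2 => h h2

lemma sig_inj (hm : 4 ≤ m) (o : Option (Fin m)) (c c' : Fin m)
    (hc : ∀ d, o = some d → c ≠ d) (hc' : ∀ d, o = some d → c' ≠ d)
    (h : sig o c = sig o c') : c = c' := by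
  rcases o with _ | d
  · simpa using add_right_cancel (h : c + 1 = c' + 1)
  · simp only [sig] at h
    split at h <;> split at h
    · next h1 h2 =>
      have : c + 1 = c' + 1 := h1.trans h2.symm
      exact add_right_cancel this
    · next h1 h2 =>
      -- c+1 = d, sig c = c+1+1 = c'+1 ⇒ c' = c+1 = d, contradiction with hc'
      exfalso
      have : c' = c + 1 := add_right_cancel (h.symm : c' + 1 = c + 1 + 1)
      exact hc' d rfl (by rw [this, h1])
    · next h1 h2 =>
      exfalso
      have : c = c' + 1 := (add_right_cancel (h : c + 1 = c' + 1 + 1))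
      exact hc d rfl (by rw [this, h2])
    · exact add_right_cancel h

end Sig

end OptIdxAux

namespace OptIdxAux
open List

variable {m : ℕ} [NeZero m]

/-- The letter-substitution map: replaces the first letter of `x` after the common
prefix with `b` by a letter different from both continuations. -/
def chi (b x : List (Fin m)) : List (Fin m) :=
  if h : cp x b < x.length then x.set (cp x b) (sig b[cp x b]? (x[cp x b]'h)) else x

@[simp] lemma chi_length (b x : List (Fin m)) : (chi b x).length = x.length := by
  unfold chi; split <;> simp

lemma chi_of_prefix {b x : List (Fin m)} (h : x <+: b) : chi b x = x := by
  unfold chi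
  rw [dif_neg]
  rw [cp_of_prefix h]
  omega

lemma chi_of_not_prefix {b x : List (Fin m)} (h : ¬ x <+: b) :
    chi b x = x.set (cp x b) (sig b[cp x b]? (x[cp x b]'(cp_lt_of_not_prefix h))) := by
  unfold chi
  rw [dif_pos (cp_lt_of_not_prefix h)]

lemma take_set {α : Type*} (l : List α) (k : ℕ) (v : α) : (l.set k v).take k = l.take k := by
  apply List.ext_getElem
  · simp
  · intro i h1 h2
    simp only [getElem_take]
    rw [List.getElem_set_ne]
    simp at h1
    omega

lemma chi_take (b x : List (Fin m)) : (chi b x).take (cp x b) = x.take (cp x b) := by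
  unfold chi; split
  · exact take_set _ _ _
  · rfl

lemma chi_getElem? {b x : List (Fin m)} (hp : ¬ x <+: b) :
    (chi b x)[cp x b]? = (x[cp x b]?).map (sig b[cp x b]?) := by
  have hk := cp_lt_of_not_prefix hp
  rw [chi_of_not_prefix hp]
  rw [getElem?_eq_getElem (by simpa using hk), getElem?_eq_getElem hk]
  simp [List.getElem_set_self]

lemma chi_getElem?_ne {b x : List (Fin m)} {i : ℕ} (hi : i ≠ cp x b) :
    (chi b x)[i]? = x[i]? := by
  unfold chi
  split
  · rw [List.getElem?_set_ne (Ne.symm hi)]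
  · rfl

lemma cp_chi (hm : 4 ≤ m) (b x : List (Fin m)) : cp (chi b x) b = cp x b := by
  by_cases hp : x <+: b
  · rw [chi_of_prefix hp]
  · have hk := cp_lt_of_not_prefix hp
    apply cp_eq_of
    · simpa using le_of_lt hk
    · rw [chi_take, take_cp]
    · intro c hc
      rw [chi_getElem? hp, getElem?_eq_getElem hk] at hc
      simp only [Option.map_some] at hc
      injection hc with hc
      intro hbc
      rcases hb : b[cp x b]? with _ | d
      · rw [hb] at hbc; simp at hbc
      · rw [hb] at hbc hc
        injection hbc with hbc
        exact sig_ne_some hm d _ (hc.trans hbc.symm)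

lemma chi_inj (hm : 4 ≤ m) (b : List (Fin m)) : Function.Injective (chi (m := m) b) := by
  intro x x' h
  by_cases hp : x <+: b <;> by_cases hp' : x' <+: b
  · rwa [chi_of_prefix hp, chi_of_prefix hp'] at h
  · exfalso
    rw [chi_of_prefix hp] at h
    have h1 : cp (chi b x') b = cp x' b := cp_chi hm b x'
    rw [← h] at h1
    rw [cp_of_prefix hp] at h1
    have h2 : x.length = x'.length := by rw [h]; simp
    have := cp_lt_of_not_prefix hp'
    omega
  · exfalso
    rw [chi_of_prefix hp'] at h
    have h1 : cp (chi b x) b = cp x b := cp_chi hm b x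
    rw [h] at h1
    rw [cp_of_prefix hp'] at h1
    have h2 : x.length = x'.length := by rw [← h]; simp
    have := cp_lt_of_not_prefix hp
    omega
  · have hk := cp_lt_of_not_prefix hp
    have hk' := cp_lt_of_not_prefix hp'
    have hcp : cp x b = cp x' b := by
      have h1 : cp (chi b x) b = cp x b := cp_chi hm b x
      have h2 : cp (chi b x') b = cp x' b := cp_chi hm b x'
      rw [h] at h1; omega
    have e2 : (chi b x')[cp x b]? = (x'[cp x b]?).map (sig b[cp x b]?) := by
      rw [hcp]; exact chi_getElem? hp'
    have e1 : (chi b x)[cp x b]? = (x[cp x b]?).map (sig b[cp x b]?) := chi_getElem? hp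
    have hge : (x[cp x b]?).map (sig b[cp x b]?) = (x'[cp x b]?).map (sig b[cp x b]?) := by
      rw [← e1, ← e2, h]
    rw [getElem?_eq_getElem hk, getElem?_eq_getElem (hcp ▸ hk' : cp x b < x'.length)] at hge
    simp only [Option.map_some] at hge
    injection hge with hge
    have hxk : ∀ d, b[cp x b]? = some d → x[cp x b]'hk ≠ d := by
      intro d hd hxd
      exact getElem?_cp_ne x b _ (getElem?_eq_getElem hk) (by rw [hd, hxd])
    have hxk' : ∀ d, b[cp x b]? = some d → x'[cp x b]'(hcp ▸ hk') ≠ d := by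
      intro d hd hxd
      have g1 : x'[cp x' b]? = some d := by
        rw [← hcp, getElem?_eq_getElem (hcp ▸ hk' : cp x b < x'.length), hxd]
      have g2 : b[cp x' b]? = some d := by rw [← hcp]; exact hd
      exact getElem?_cp_ne x' b d g1 g2
    have heq := sig_inj hm _ _ _ hxk hxk' hge
    apply List.ext_getElem?
    intro i
    rcases eq_or_ne i (cp x b) with rfl | hi
    · rw [getElem?_eq_getElem hk, getElem?_eq_getElem (hcp ▸ hk' : cp x b < x'.length), heq]
    · have d1 : (chi b x)[i]? = x[i]? := chi_getElem?_ne hi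
      have d2 : (chi b x')[i]? = x'[i]? := by
        apply chi_getElem?_ne; rw [← hcp]; exact hi
      rw [← d1, ← d2, h]

lemma core_head {b x : List (Fin m)} {c : Fin m} {w' : List (Fin m)}
    (hpfx : x.take (cp x b) ++ c :: w' <+: chi b x) (hk : cp x b < x.length) :
    (chi b x)[cp x b]? = some c := by
  have hlen2 : cp x b < (x.take (cp x b) ++ c :: w').length := by
    simp [Nat.min_eq_left (le_of_lt hk)]
  have hlc : cp x b < (chi b x).length := by simpa using hk
  rw [getElem?_eq_getElem hlc]
  have := hpfx.getElem (i := cp x b) hlen2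
  rw [← this]
  congr 1
  rw [List.getElem_append_right (by simp [Nat.min_eq_left (le_of_lt hk)])]
  simp [Nat.min_eq_left (le_of_lt hk)]

lemma core_u (hm : 4 ≤ m) (b x : List (Fin m)) (w : List (Fin m)) (hw : w ≠ [])
    (hwx : w <+: x.drop (cp x b)) : ¬ (x.take (cp x b) ++ w <+: chi b x) := by
  intro hpfx
  by_cases hp : x <+: b
  · rw [chi_of_prefix hp] at hpfx
    rw [cp_of_prefix hp] at hwx hpfx
    simp at hwx
    rw [hwx] at hw
    exact hw rfl
  · have hk := cp_lt_of_not_prefix hp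
    rcases w with _ | ⟨c, w'⟩
    · exact hw rfl
    have h1 : (chi b x)[cp x b]? = some c := core_head hpfx hk
    have h2 : x[cp x b]'hk = c := by
      have := hwx.getElem (i := 0) (by simp)
      rw [List.getElem_drop] at this
      simpa using this.symm
    rw [chi_getElem? hp, getElem?_eq_getElem hk] at h1
    simp only [Option.map_some] at h1
    injection h1 with h1
    rw [h2] at h1
    exact sig_ne_self hm _ _ h1

lemma core_v (hm : 4 ≤ m) (b x : List (Fin m)) (w : List (Fin m)) (hw : w ≠ [])
    (hwb : w <+: b.drop (cp x b)) : ¬ (x.take (cp x b) ++ w <+: chi b x) := by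
  intro hpfx
  rcases w with _ | ⟨c, w'⟩
  · exact hw rfl
  have hkb : cp x b < b.length := by
    have := hwb.length_le
    simp at this
    omega
  by_cases hp : x <+: b
  · rw [chi_of_prefix hp, cp_of_prefix hp] at hpfx
    have := hpfx.length_le
    simp [Nat.min_eq_left (le_refl _)] at this
  · have hk := cp_lt_of_not_prefix hp
    have h1 : (chi b x)[cp x b]? = some c := core_head hpfx hk
    have h2 : b[cp x b]'hkb = c := by
      have := hwb.getElem (i := 0) (by simp)
      rw [List.getElem_drop] at this
      simpa using this.symm
    rw [chi_getElem? hp, getElem?_eq_getElem hk, getElem?_eq_getElem hkb] at h1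
    simp only [Option.map_some] at h1
    injection h1 with h1
    rw [h2] at h1
    exact sig_ne_some hm _ _ h1

end OptIdxAux

namespace OptIdxAux
open List SimpleGraph

variable {m h : ℕ}

abbrev VT (m h : ℕ) := {l : List (Fin m) // l.length ≤ h - 1}

lemma adj_up (s : Bool) (c : Fin m) (l : List (Fin m)) (h1 : (c :: l).length ≤ h - 1)
    (h2 : l.length ≤ h - 1) :
    (doubleMAryTree m h).Adj (s, ⟨c :: l, h1⟩) (s, ⟨l, h2⟩) :=
  Or.inl ⟨rfl, Or.inl ⟨c, rfl⟩⟩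

lemma adj_mid (h1 : ([] : List (Fin m)).length ≤ h - 1) :
    (doubleMAryTree m h).Adj (false, ⟨[], h1⟩) (true, ⟨[], h1⟩) :=
  Or.inr ⟨by simp, rfl, rfl⟩

lemma len_suffix_le {w r : List (Fin m)} (hw : (w ++ r).length ≤ h - 1) :
    r.length ≤ h - 1 := by simp at hw; omega

def upWalk (s : Bool) : (w r : List (Fin m)) → (hw : (w ++ r).length ≤ h - 1) →
    (doubleMAryTree m h).Walk (s, ⟨w ++ r, hw⟩) (s, ⟨r, len_suffix_le hw⟩)
  | [], r, hw => Walk.nil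
  | c :: w, r, hw =>
      Walk.cons (adj_up s c (w ++ r) hw (by simp at hw ⊢; omega))
        (upWalk s w r (by simp at hw ⊢; omega))

lemma upWalk_support {s : Bool} : ∀ {w r : List (Fin m)} {hw} {x : Bool × VT m h},
    x ∈ (upWalk s w r hw).support → x.1 = s ∧ ∃ t, t <:+ w ∧ x.2.val = t ++ r
  | [], r, hw, x => by
    intro hx
    simp only [upWalk, Walk.support_nil, List.mem_singleton] at hx
    subst hx
    exact ⟨rfl, [], nil_suffix, rfl⟩
  | c :: w, r, hw, x => by
    intro hx
    simp only [upWalk, Walk.support_cons, List.mem_cons] at hx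
    rcases hx with rfl | hx
    · exact ⟨rfl, c :: w, suffix_refl _, rfl⟩
    · obtain ⟨h1, t, ht, h2⟩ := upWalk_support hx
      exact ⟨h1, t, ht.trans (suffix_cons c w), h2⟩

lemma upWalk_isPath {s : Bool} : ∀ {w r : List (Fin m)} {hw},
    (upWalk (m := m) (h := h) s w r hw).IsPath
  | [], r, hw => by simp [upWalk]
  | c :: w, r, hw => by
    rw [upWalk, Walk.cons_isPath_iff]
    refine ⟨upWalk_isPath, fun hx => ?_⟩
    obtain ⟨-, t, ht, h2⟩ := upWalk_support hx
    have := ht.length_le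
    have := congrArg List.length h2
    simp at this
    omega

lemma upWalk_edges {s : Bool} : ∀ {w r : List (Fin m)} {hw} {e : Sym2 (Bool × VT m h)},
    e ∈ (upWalk s w r hw).edges →
      ∃ (c : Fin m) (t : List (Fin m)) (x y : Bool × VT m h),
        e = s(x, y) ∧ x.1 = s ∧ y.1 = s ∧ x.2.val = c :: (t ++ r) ∧ y.2.val = t ++ r ∧
          c :: t <:+ w
  | [], r, hw, e => by
    intro he
    simp [upWalk] at he
  | c :: w, r, hw, e => by
    intro he
    simp only [upWalk, Walk.edges_cons, List.mem_cons] at he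
    rcases he with rfl | he
    · exact ⟨c, w, _, _, rfl, rfl, rfl, rfl, rfl, suffix_refl _⟩
    · obtain ⟨c', t, x, y, he, hx1, hy1, hx2, hy2, ht⟩ := upWalk_edges he
      exact ⟨c', t, x, y, he, hx1, hy1, hx2, hy2, ht.trans (suffix_cons c w)⟩

def sideWalk (s : Bool) (u v r : List (Fin m)) (hu : (u ++ r).length ≤ h - 1)
    (hv : (v ++ r).length ≤ h - 1) :
    (doubleMAryTree m h).Walk (s, ⟨u ++ r, hu⟩) (s, ⟨v ++ r, hv⟩) :=
  (upWalk s u r hu).append (upWalk s v r hv).reverse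

lemma sideWalk_isPath {s : Bool} {v r : List (Fin m)}
    {hv : (v ++ r).length ≤ h - 1} :
    ∀ {u : List (Fin m)} {hu : (u ++ r).length ≤ h - 1},
    (∀ w, w ≠ [] → ¬(w <:+ u ∧ w <:+ v)) →
    (sideWalk (m := m) (h := h) s u v r hu hv).IsPath
  | [], hu, hdiv => by
    unfold sideWalk
    rw [upWalk]
    exact (Walk.nil_append _) ▸ upWalk_isPath.reverse
  | c :: u, hu, hdiv => by
    have key : ∀ (hu' : (u ++ r).length ≤ h - 1),
        (sideWalk (m := m) (h := h) s u v r hu' hv).IsPath := by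
      intro hu'
      apply sideWalk_isPath
      intro w hw ⟨h1, h2⟩
      exact hdiv w hw ⟨h1.trans (suffix_cons c u), h2⟩
    unfold sideWalk at key ⊢
    rw [upWalk]
    rw [Walk.cons_append, Walk.cons_isPath_iff]
    refine ⟨key _, fun hx => ?_⟩
    rw [Walk.mem_support_append_iff] at hx
    rcases hx with hx | hx
    · obtain ⟨-, t, ht, h2⟩ := upWalk_support hx
      have := ht.length_le
      have := congrArg List.length h2
      simp at this
      omega
    · rw [Walk.support_reverse, List.mem_reverse] at hx
      obtain ⟨-, t, ht, h2⟩ := upWalk_support hx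
      simp only at h2
      have htcu : t = c :: u := append_cancel_right h2.symm
      exact hdiv (c :: u) (by simp) ⟨suffix_refl _, htcu ▸ ht⟩

lemma sideWalk_edges {s : Bool} {u v r : List (Fin m)} {hu hv}
    {e : Sym2 (Bool × VT m h)} (he : e ∈ (sideWalk s u v r hu hv).edges) :
    ∃ (c : Fin m) (t : List (Fin m)) (x y : Bool × VT m h),
      e = s(x, y) ∧ x.1 = s ∧ y.1 = s ∧ x.2.val = c :: (t ++ r) ∧ y.2.val = t ++ r ∧
        (c :: t <:+ u ∨ c :: t <:+ v) := by
  unfold sideWalk at he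
  rw [Walk.edges_append, List.mem_append] at he
  rcases he with he | he
  · obtain ⟨c, t, x, y, h1, h2, h3, h4, h5, h6⟩ := upWalk_edges he
    exact ⟨c, t, x, y, h1, h2, h3, h4, h5, Or.inl h6⟩
  · rw [Walk.edges_reverse, List.mem_reverse] at he
    obtain ⟨c, t, x, y, h1, h2, h3, h4, h5, h6⟩ := upWalk_edges he
    exact ⟨c, t, x, y, h1, h2, h3, h4, h5, Or.inr h6⟩

end OptIdxAux

namespace OptIdxAux
open List SimpleGraph

variable {m h : ℕ}

/-- length of common prefix of the reversals. -/
def cpl (a b : VT m h) : ℕ := cp a.val.reverse b.val.reverse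

def Uu (a b : VT m h) : List (Fin m) := (a.val.reverse.drop (cpl a b)).reverse

def Rr (a b : VT m h) : List (Fin m) := (a.val.reverse.take (cpl a b)).reverse

lemma cpl_comm (a b : VT m h) : cpl a b = cpl b a := cp_comm _ _

lemma split_a (a b : VT m h) : a.val = Uu a b ++ Rr a b := by
  unfold Uu Rr
  rw [← List.reverse_append, List.take_append_drop, List.reverse_reverse]

lemma Rr_comm (a b : VT m h) : Rr a b = Rr b a := by
  unfold Rr
  rw [cpl_comm a b]
  exact congrArg List.reverse (take_cp b.val.reverse a.val.reverse).symm

lemma lenU (a b : VT m h) : (Uu a b ++ Rr a b).length ≤ h - 1 := by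
  rw [← split_a]; exact a.2

lemma lenV (a b : VT m h) : (Uu b a ++ Rr a b).length ≤ h - 1 := by
  rw [Rr_comm a b, ← split_a]; exact b.2

lemma div_cp (X Y : List (Fin m)) (w : List (Fin m)) (hw : w ≠ [])
    (hpx : w <+: X.drop (cp X Y)) (hpy : w <+: Y.drop (cp X Y)) : False := by
  rcases w with _ | ⟨c, w'⟩
  · exact hw rfl
  have hkx : cp X Y < X.length := by
    have := hpx.length_le; simp at this; omega
  have hky : cp X Y < Y.length := by
    have := hpy.length_le; simp at this; omega
  have h1 : X[cp X Y]? = some c := by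
    have := hpx.getElem (i := 0) (by simp)
    rw [List.getElem_drop] at this
    rw [getElem?_eq_getElem hkx]
    simpa using this.symm
  have h2 : Y[cp X Y]? = some c := by
    have := hpy.getElem (i := 0) (by simp)
    rw [List.getElem_drop] at this
    rw [getElem?_eq_getElem hky]
    simpa using this.symm
  exact getElem?_cp_ne X Y c h1 h2

lemma div_Uu (a b : VT m h) (w : List (Fin m)) (hw : w ≠ [])
    (h1 : w <:+ Uu a b) (h2 : w <:+ Uu b a) : False := by
  unfold Uu at h1 h2
  rw [← List.reverse_reverse w] at h1 h2
  rw [List.reverse_suffix] at h1 h2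
  rw [cpl_comm b a] at h2
  refine div_cp a.val.reverse b.val.reverse w.reverse (by simpa using hw) h1 h2

def samePath (s : Bool) (a b : VT m h) :
    (doubleMAryTree m h).Walk (s, a) (s, b) :=
  (sideWalk s (Uu a b) (Uu b a) (Rr a b) (lenU a b) (lenV a b)).copy
    (congrArg (Prod.mk s) (Subtype.ext (split_a a b).symm))
    (congrArg (Prod.mk s) (Subtype.ext (show Uu b a ++ Rr a b = b.val by
      rw [Rr_comm a b, ← split_a])))

lemma samePath_isPath (s : Bool) (a b : VT m h) : (samePath s a b).IsPath := by
  unfold samePath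
  rw [Walk.isPath_copy]
  exact sideWalk_isPath (fun w hw hsfx => div_Uu a b w hw hsfx.1 hsfx.2)

lemma samePath_edges {s : Bool} {a b : VT m h} {e : Sym2 (Bool × VT m h)}
    (he : e ∈ (samePath s a b).edges) :
    ∃ (c : Fin m) (t : List (Fin m)) (x y : Bool × VT m h),
      e = s(x, y) ∧ x.1 = s ∧ y.1 = s ∧ x.2.val = c :: (t ++ Rr a b) ∧
        y.2.val = t ++ Rr a b ∧ (c :: t <:+ Uu a b ∨ c :: t <:+ Uu b a) := by
  unfold samePath at he
  rw [Walk.edges_copy] at he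
  exact sideWalk_edges he

def crossPath (a b : VT m h) :
    (doubleMAryTree m h).Walk (false, a) (true, b) :=
  (((upWalk false a.val [] (by simpa using a.2)).copy
      (congrArg (Prod.mk false) (Subtype.ext (List.append_nil a.val)))
      rfl)).append
    (Walk.cons (adj_mid (by simp))
      (((upWalk true b.val [] (by simpa using b.2)).copy
        (congrArg (Prod.mk true) (Subtype.ext (List.append_nil b.val)))
        rfl).reverse))

lemma crossPath_isPath (a b : VT m h) : (crossPath a b).IsPath := by
  unfold crossPath
  rw [Walk.isPath_def, Walk.support_append]
  apply List.Nodup.append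
  · rw [Walk.support_copy]
    exact upWalk_isPath.support_nodup
  · rw [Walk.support_cons]
    simp only [List.tail_cons]
    rw [Walk.support_reverse]
    exact (List.nodup_reverse).2 (by rw [Walk.support_copy]; exact upWalk_isPath.support_nodup)
  · intro x hx hx2
    rw [Walk.support_copy] at hx
    have h1 := (upWalk_support hx).1
    rw [Walk.support_cons] at hx2
    simp only [List.tail_cons] at hx2
    rw [Walk.support_reverse, List.mem_reverse, Walk.support_copy] at hx2
    have h2 := (upWalk_support hx2).1
    rw [h1] at h2
    exact Bool.false_ne_true h2

lemma crossPath_edges {a b : VT m h} {e : Sym2 (Bool × VT m h)}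
    (he : e ∈ (crossPath a b).edges) :
    (∃ (c : Fin m) (t : List (Fin m)) (x y : Bool × VT m h),
        e = s(x, y) ∧ x.1 = false ∧ y.1 = false ∧ x.2.val = c :: t ∧ y.2.val = t ∧
          c :: t <:+ a.val)
    ∨ (∃ (x y : Bool × VT m h), e = s(x, y) ∧ x.1 = false ∧ x.2.val = [] ∧
        y.1 = true ∧ y.2.val = [])
    ∨ (∃ (c : Fin m) (t : List (Fin m)) (x y : Bool × VT m h),
        e = s(x, y) ∧ x.1 = true ∧ y.1 = true ∧ x.2.val = c :: t ∧ y.2.val = t ∧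
          c :: t <:+ b.val) := by
  unfold crossPath at he
  rw [Walk.edges_append, List.mem_append, Walk.edges_copy, Walk.edges_cons] at he
  rcases he with he | he
  · obtain ⟨c, t, x, y, h1, h2, h3, h4, h5, h6⟩ := upWalk_edges he
    rw [List.append_nil] at h4 h5
    exact Or.inl ⟨c, t, x, y, h1, h2, h3, h4, h5, h6⟩
  · rw [List.mem_cons] at he
    rcases he with rfl | he
    · exact Or.inr (Or.inl ⟨_, _, rfl, rfl, rfl, rfl, rfl⟩)
    · rw [Walk.edges_reverse, List.mem_reverse, Walk.edges_copy] at he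
      obtain ⟨c, t, x, y, h1, h2, h3, h4, h5, h6⟩ := upWalk_edges he
      rw [List.append_nil] at h4 h5
      exact Or.inr (Or.inr ⟨c, t, x, y, h1, h2, h3, h4, h5, h6⟩)

def canon : (x y : Bool × VT m h) → (doubleMAryTree m h).Walk x y
  | (false, a), (false, b) => samePath false a b
  | (true, a), (true, b) => samePath true a b
  | (false, a), (true, b) => crossPath a b
  | (true, a), (false, b) => (crossPath b a).reverse

lemma canon_isPath (x y : Bool × VT m h) : (canon x y).IsPath := by
  rcases x with ⟨sx, a⟩
  rcases y with ⟨sy, b⟩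
  cases sx <;> cases sy
  · exact samePath_isPath _ _ _
  · exact crossPath_isPath _ _
  · exact (crossPath_isPath _ _).reverse
  · exact samePath_isPath _ _ _

noncomputable def encK : Bool × VT m h → ℕ :=
  fun x => Encodable.encode (x.1, x.2.val)

lemma encK_inj : Function.Injective (encK (m := m) (h := h)) := by
  intro x y hxy
  have := Encodable.encode_injective hxy
  rcases x with ⟨sx, a⟩; rcases y with ⟨sy, b⟩
  simp only [Prod.mk.injEq] at this
  exact Prod.ext this.1 (Subtype.ext this.2)

noncomputable def route (x y : Bool × VT m h) : (doubleMAryTree m h).Walk x y :=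
  if h' : x = y then Walk.nil.copy rfl h'
  else if encK x < encK y then canon x y else (canon y x).reverse

lemma route_isPath (x y : Bool × VT m h) : (route x y).IsPath := by
  unfold route
  split
  · simp
  · split
    · exact canon_isPath x y
    · exact (canon_isPath y x).reverse

lemma route_symm (x y : Bool × VT m h) : route y x = (route x y).reverse := by
  unfold route
  rcases eq_or_ne x y with rfl | hne
  · simp
  · rw [dif_neg hne, dif_neg (Ne.symm hne)]
    have : encK x ≠ encK y := fun hc => hne (encK_inj hc)
    rcases lt_or_gt_of_ne this with h1 | h1
    · rw [if_neg (show ¬ encK y < encK x by omega), if_pos h1]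
    · rw [if_pos (show encK y < encK x by omega),
        if_neg (show ¬ encK x < encK y by omega), Walk.reverse_reverse]

lemma route_edges {x y : Bool × VT m h} {e : Sym2 (Bool × VT m h)}
    (he : e ∈ (route x y).edges) :
    e ∈ (canon x y).edges ∨ e ∈ (canon y x).edges := by
  unfold route at he
  split at he
  · simp at he
  · split at he
    · exact Or.inl he
    · rw [Walk.edges_reverse, List.mem_reverse] at he
      exact Or.inr he

noncomputable def routing (m h : ℕ) : Routing (doubleMAryTree m h) :=
  ⟨route, route_isPath, route_symm⟩

end OptIdxAux

namespace OptIdxAux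
open List SimpleGraph

variable {m h : ℕ} [NeZero m]

lemma sfx_rev {α : Type*} {l₁ l₂ : List α} (hh : l₁ <:+ l₂.reverse) :
    l₁.reverse <+: l₂ := by
  have := List.reverse_prefix.mpr hh
  rwa [List.reverse_reverse] at this

def chiV (b a : VT m h) : VT m h :=
  ⟨(chi b.val.reverse a.val.reverse).reverse, by
    rw [List.length_reverse, chi_length, List.length_reverse]; exact a.2⟩

lemma chiV_inj (hm4 : 4 ≤ m) (b : VT m h) :
    Function.Injective (chiV (m := m) (h := h) b) := by
  intro a a' hh
  have h1 := congrArg (fun v : VT m h => v.val.reverse) hh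
  simp only [chiV, List.reverse_reverse] at h1
  have h2 := chi_inj hm4 _ h1
  exact Subtype.ext (by simpa using congrArg List.reverse h2)

lemma side_clash {x y x₁ y₁ : Bool × VT m h} {s0 s1 : Bool}
    (hxy : s(x, y) = s(x₁, y₁))
    (hx : x.1 = s0) (hy : y.1 = s0) (hx₁ : x₁.1 = s1) (hy₁ : y₁.1 = s1)
    (hss : s0 ≠ s1) : False := by
  rw [Sym2.eq_iff] at hxy
  rcases hxy with ⟨h1, h2⟩ | ⟨h1, h2⟩
  · rw [← h1] at hx₁
    exact hss (hx.symm.trans hx₁)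
  · rw [← h1] at hy₁
    exact hss (hx.symm.trans hy₁)

lemma mid_clash {x y x₁ y₁ : Bool × VT m h} {s0 : Bool}
    (hxy : s(x, y) = s(x₁, y₁))
    (hx : x.1 = false) (hy : y.1 = true) (hx₁ : x₁.1 = s0) (hy₁ : y₁.1 = s0) : False := by
  rw [Sym2.eq_iff] at hxy
  rcases hxy with ⟨h1, h2⟩ | ⟨h1, h2⟩
  · rw [← h1] at hx₁
    rw [← h2] at hy₁
    rw [hx] at hx₁
    rw [hy] at hy₁
    exact Bool.false_ne_true (hx₁.trans hy₁.symm)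
  · rw [← h1] at hy₁
    rw [← h2] at hx₁
    rw [hx] at hy₁
    rw [hy] at hx₁
    exact Bool.false_ne_true (hy₁.trans hx₁.symm)

lemma clash (hm4 : 4 ≤ m) {aI bI aC : VT m h} (hcol : aC = chiV bI aI)
    {x y x₁ y₁ : Bool × VT m h} {c c₁ : Fin m} {t t₁ : List (Fin m)}
    (hxy : s(x, y) = s(x₁, y₁))
    (hx : x.2.val = c :: t) (hy : y.2.val = t) (hsfx : c :: t <:+ aC.val)
    (hx₁ : x₁.2.val = c₁ :: (t₁ ++ Rr aI bI)) (hy₁ : y₁.2.val = t₁ ++ Rr aI bI)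
    (ht₁ : c₁ :: t₁ <:+ Uu aI bI ∨ c₁ :: t₁ <:+ Uu bI aI) : False := by
  rw [Sym2.eq_iff] at hxy
  rcases hxy with ⟨hex, hey⟩ | ⟨hex, hey⟩
  · have hc : c :: t = c₁ :: (t₁ ++ Rr aI bI) := by rw [← hx, hex, hx₁]
    rw [List.cons.injEq] at hc
    obtain ⟨rfl, hc2⟩ := hc
    rw [hc2, hcol] at hsfx
    have hpfx : (c :: (t₁ ++ Rr aI bI)).reverse <+: chi bI.val.reverse aI.val.reverse := by
      apply sfx_rev
      simpa [chiV] using hsfx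
    have hrw : (c :: (t₁ ++ Rr aI bI)).reverse
        = aI.val.reverse.take (cp aI.val.reverse bI.val.reverse) ++ (t₁.reverse ++ [c]) := by
      simp only [List.reverse_cons, List.reverse_append, Rr, cpl, List.reverse_reverse,
        List.append_assoc]
    rw [hrw] at hpfx
    have hwne : t₁.reverse ++ [c] ≠ [] := by simp
    rcases ht₁ with hU | hU
    · refine core_u hm4 bI.val.reverse aI.val.reverse _ hwne ?_ hpfx
      have h5 : (c :: t₁).reverse <+: aI.val.reverse.drop (cpl aI bI) := by
        apply sfx_rev
        simpa [Uu] using hU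
      simpa [cpl, List.reverse_cons] using h5
    · refine core_v hm4 bI.val.reverse aI.val.reverse _ hwne ?_ hpfx
      have h5 : (c :: t₁).reverse <+: bI.val.reverse.drop (cpl bI aI) := by
        apply sfx_rev
        simpa [Uu] using hU
      rw [cpl_comm bI aI] at h5
      simpa [cpl, List.reverse_cons] using h5
  · have h1 : x.2.val = t₁ ++ Rr aI bI := by rw [hex, hy₁]
    have h2 : y.2.val = c₁ :: (t₁ ++ Rr aI bI) := by rw [hey, hx₁]
    rw [hx] at h1
    rw [hy] at h2
    have l1 := congrArg List.length h1
    have l2 := congrArg List.length h2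
    simp only [List.length_cons, List.length_append] at l1 l2
    omega

/-- Conflict between a cross path and an internal path forces the first (resp. second)
coordinate of the internal colour to differ from the cross endpoint. -/
lemma cross_int (hm4 : 4 ≤ m) {aC bC aI bI : VT m h} {sI : Bool}
    {e : Sym2 (Bool × VT m h)}
    (he1 : e ∈ (crossPath aC bC).edges)
    (hint : ∃ (c : Fin m) (t : List (Fin m)) (x y : Bool × VT m h),
      e = s(x, y) ∧ x.1 = sI ∧ y.1 = sI ∧ x.2.val = c :: (t ++ Rr aI bI) ∧
        y.2.val = t ++ Rr aI bI ∧ (c :: t <:+ Uu aI bI ∨ c :: t <:+ Uu bI aI))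
    (hchi : (sI = false ∧ aC = chiV bI aI) ∨ (sI = true ∧ bC = chiV bI aI)) : False := by
  obtain ⟨c₁, t₁, x₁, y₁, hE, hx₁s, hy₁s, hx₁, hy₁, ht₁⟩ := hint
  rcases crossPath_edges he1 with ⟨c, t, x, y, hE', hxs, hys, hxv, hyv, hsfx⟩ |
    ⟨x, y, hE', hxs, hxv, hys, hyv⟩ |
    ⟨c, t, x, y, hE', hxs, hys, hxv, hyv, hsfx⟩
  · rcases hchi with ⟨hsI, hcol⟩ | ⟨hsI, hcol⟩
    · exact clash hm4 hcol (hE'.symm.trans hE) hxv hyv hsfx hx₁ hy₁ ht₁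
    · exact side_clash (hE'.symm.trans hE) hxs hys hx₁s hy₁s (by rw [hsI]; simp)
  · exact mid_clash (hE'.symm.trans hE) hxs hys hx₁s hy₁s
  · rcases hchi with ⟨hsI, hcol⟩ | ⟨hsI, hcol⟩
    · exact side_clash (hE'.symm.trans hE) hxs hys hx₁s hy₁s (by rw [hsI]; simp)
    · exact clash hm4 hcol (hE'.symm.trans hE) hxv hyv hsfx hx₁ hy₁ ht₁

end OptIdxAux

namespace OptIdxAux
open List SimpleGraph

variable {m h : ℕ} [NeZero m]

noncomputable def encV (a : VT m h) : ℕ := Encodable.encode a.val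

lemma encV_inj {a b : VT m h} (hab : encV a = encV b) : a = b :=
  Subtype.ext (Encodable.encode_injective hab)

noncomputable def colPair : Bool × VT m h → Bool × VT m h → VT m h × VT m h
  | (false, a), (false, b) => if encV a ≤ encV b then (chiV b a, b) else (chiV a b, a)
  | (true, a), (true, b) => if encV a ≤ encV b then (b, chiV b a) else (a, chiV a b)
  | (false, a), (true, b) => (a, b)
  | (true, a), (false, b) => (b, a)

lemma colPair_symm (x y : Bool × VT m h) : colPair x y = colPair y x := by
  rcases x with ⟨sx, a⟩
  rcases y with ⟨sy, b⟩
  cases sx <;> cases sy <;> simp only [colPair]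
  · by_cases h1 : encV a ≤ encV b <;> by_cases h2 : encV b ≤ encV a
    · have : a = b := encV_inj (le_antisymm h1 h2)
      subst this
      simp
    · rw [if_pos h1, if_neg h2]
    · rw [if_neg h1, if_pos h2]
    · omega
  · by_cases h1 : encV a ≤ encV b <;> by_cases h2 : encV b ≤ encV a
    · have : a = b := encV_inj (le_antisymm h1 h2)
      subst this
      simp
    · rw [if_pos h1, if_neg h2]
    · rw [if_neg h1, if_pos h2]
    · omega

lemma int_hint {s : Bool} {a b : VT m h} {e : Sym2 (Bool × VT m h)}
    (he : e ∈ (samePath s a b).edges) :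
    ∃ (c : Fin m) (t : List (Fin m)) (x y : Bool × VT m h),
      e = s(x, y) ∧ x.1 = s ∧ y.1 = s ∧ x.2.val = c :: (t ++ Rr b a) ∧
        y.2.val = t ++ Rr b a ∧ (c :: t <:+ Uu b a ∨ c :: t <:+ Uu a b) := by
  obtain ⟨c, t, x, y, hE, hxs, hys, hxv, hyv, ht⟩ := samePath_edges he
  rw [Rr_comm a b] at hxv hyv
  exact ⟨c, t, x, y, hE, hxs, hys, hxv, hyv, ht.symm⟩

lemma key (hm4 : 4 ≤ m) {x0 y0 x0' y0' : Bool × VT m h} {e : Sym2 (Bool × VT m h)}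
    (hne : s(x0, y0) ≠ s(x0', y0'))
    (he1 : e ∈ (canon x0 y0).edges) (he2 : e ∈ (canon x0' y0').edges)
    (hcol : colPair x0 y0 = colPair x0' y0') : False := by
  rcases x0 with ⟨s1, a⟩
  rcases y0 with ⟨s2, b⟩
  rcases x0' with ⟨s3, a'⟩
  rcases y0' with ⟨s4, b'⟩
  cases s1 <;> cases s2 <;> cases s3 <;> cases s4 <;>
    simp only [canon, colPair] at he1 he2 hcol
  -- FF FF
  · split_ifs at hcol <;> rw [Prod.mk.injEq] at hcol <;> obtain ⟨h1, h2⟩ := hcol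
    · subst h2
      have := chiV_inj hm4 _ h1
      subst this
      exact hne rfl
    · subst h2
      have := chiV_inj hm4 _ h1
      subst this
      exact hne (Sym2.eq_swap)
    · subst h2
      have := chiV_inj hm4 _ h1
      subst this
      exact hne (Sym2.eq_swap)
    · subst h2
      have := chiV_inj hm4 _ h1
      subst this
      exact hne rfl
  -- FF FT : A-internal vs cross
  · split_ifs at hcol <;> rw [Prod.mk.injEq] at hcol <;> obtain ⟨h1, h2⟩ := hcol
    · exact cross_int hm4 he2 (samePath_edges he1) (Or.inl ⟨rfl, h1.symm⟩)
    · exact cross_int hm4 he2 (int_hint he1) (Or.inl ⟨rfl, h1.symm⟩)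
  -- FF TF : A-internal vs reversed cross
  · rw [Walk.edges_reverse, List.mem_reverse] at he2
    split_ifs at hcol <;> rw [Prod.mk.injEq] at hcol <;> obtain ⟨h1, h2⟩ := hcol
    · exact cross_int hm4 he2 (samePath_edges he1) (Or.inl ⟨rfl, h1.symm⟩)
    · exact cross_int hm4 he2 (int_hint he1) (Or.inl ⟨rfl, h1.symm⟩)
  -- FF TT
  · obtain ⟨c, t, x, y, hE, hxs, hys, -, -, -⟩ := samePath_edges he1
    obtain ⟨c', t', x', y', hE', hxs', hys', -, -, -⟩ := samePath_edges he2
    exact side_clash (hE.symm.trans hE') hxs hys hxs' hys' (by simp)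
  -- FT FF : cross vs A-internal
  · split_ifs at hcol <;> rw [Prod.mk.injEq] at hcol <;> obtain ⟨h1, h2⟩ := hcol
    · exact cross_int hm4 he1 (samePath_edges he2) (Or.inl ⟨rfl, h1⟩)
    · exact cross_int hm4 he1 (int_hint he2) (Or.inl ⟨rfl, h1⟩)
  -- FT FT
  · rw [Prod.mk.injEq] at hcol
    obtain ⟨h1, h2⟩ := hcol
    subst h1; subst h2
    exact hne rfl
  -- FT TF
  · rw [Prod.mk.injEq] at hcol
    obtain ⟨h1, h2⟩ := hcol
    subst h1; subst h2
    exact hne (Sym2.eq_swap)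
  -- FT TT : cross vs B-internal
  · split_ifs at hcol <;> rw [Prod.mk.injEq] at hcol <;> obtain ⟨h1, h2⟩ := hcol
    · exact cross_int hm4 he1 (samePath_edges he2) (Or.inr ⟨rfl, h2⟩)
    · exact cross_int hm4 he1 (int_hint he2) (Or.inr ⟨rfl, h2⟩)
  -- TF FF : reversed cross vs A-internal
  · rw [Walk.edges_reverse, List.mem_reverse] at he1
    split_ifs at hcol <;> rw [Prod.mk.injEq] at hcol <;> obtain ⟨h1, h2⟩ := hcol
    · exact cross_int hm4 he1 (samePath_edges he2) (Or.inl ⟨rfl, h1⟩)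
    · exact cross_int hm4 he1 (int_hint he2) (Or.inl ⟨rfl, h1⟩)
  -- TF FT
  · rw [Prod.mk.injEq] at hcol
    obtain ⟨h1, h2⟩ := hcol
    subst h1; subst h2
    exact hne (Sym2.eq_swap)
  -- TF TF
  · rw [Prod.mk.injEq] at hcol
    obtain ⟨h1, h2⟩ := hcol
    subst h1; subst h2
    exact hne rfl
  -- TF TT : reversed cross vs B-internal
  · rw [Walk.edges_reverse, List.mem_reverse] at he1
    split_ifs at hcol <;> rw [Prod.mk.injEq] at hcol <;> obtain ⟨h1, h2⟩ := hcol
    · exact cross_int hm4 he1 (samePath_edges he2) (Or.inr ⟨rfl, h2⟩)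
    · exact cross_int hm4 he1 (int_hint he2) (Or.inr ⟨rfl, h2⟩)
  -- TT FF
  · obtain ⟨c, t, x, y, hE, hxs, hys, -, -, -⟩ := samePath_edges he1
    obtain ⟨c', t', x', y', hE', hxs', hys', -, -, -⟩ := samePath_edges he2
    exact side_clash (hE.symm.trans hE') hxs hys hxs' hys' (by simp)
  -- TT FT : B-internal vs cross
  · split_ifs at hcol <;> rw [Prod.mk.injEq] at hcol <;> obtain ⟨h1, h2⟩ := hcol
    · exact cross_int hm4 he2 (samePath_edges he1) (Or.inr ⟨rfl, h2.symm⟩)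
    · exact cross_int hm4 he2 (int_hint he1) (Or.inr ⟨rfl, h2.symm⟩)
  -- TT TF
  · rw [Walk.edges_reverse, List.mem_reverse] at he2
    split_ifs at hcol <;> rw [Prod.mk.injEq] at hcol <;> obtain ⟨h1, h2⟩ := hcol
    · exact cross_int hm4 he2 (samePath_edges he1) (Or.inr ⟨rfl, h2.symm⟩)
    · exact cross_int hm4 he2 (int_hint he1) (Or.inr ⟨rfl, h2.symm⟩)
  -- TT TT
  · split_ifs at hcol <;> rw [Prod.mk.injEq] at hcol <;> obtain ⟨h1, h2⟩ := hcol
    · subst h1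
      have := chiV_inj hm4 _ h2
      subst this
      exact hne rfl
    · subst h1
      have := chiV_inj hm4 _ h2
      subst this
      exact hne (Sym2.eq_swap)
    · subst h1
      have := chiV_inj hm4 _ h2
      subst this
      exact hne (Sym2.eq_swap)
    · subst h1
      have := chiV_inj hm4 _ h2
      subst this
      exact hne rfl

end OptIdxAux

namespace OptIdxAux
open List SimpleGraph

variable {m h : ℕ} [NeZero m]

noncomputable def colFun : {p : Sym2 (Bool × VT m h) // ¬ p.IsDiag} → VT m h × VT m h :=
  fun p => Sym2.lift ⟨colPair, colPair_symm⟩ p.val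

lemma coloring_valid (hm4 : 4 ≤ m) {p q : {p : Sym2 (Bool × VT m h) // ¬ p.IsDiag}}
    (hadj : (routing m h).conflictGraph.Adj p q) : colFun p ≠ colFun q := by
  obtain ⟨hne, u, v, u', v', e, hp, hq, he1, he2⟩ := hadj
  intro hcol
  have hpv : colFun p = colPair u v := by
    show Sym2.lift ⟨colPair, colPair_symm⟩ p.val = _
    rw [hp, Sym2.lift_mk]
  have hqv : colFun q = colPair u' v' := by
    show Sym2.lift ⟨colPair, colPair_symm⟩ q.val = _
    rw [hq, Sym2.lift_mk]
  have hcc : colPair u v = colPair u' v' := by rw [← hpv, ← hqv, hcol]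
  have hne' : s(u, v) ≠ s(u', v') := by
    intro hh
    exact hne (Subtype.ext (hp.trans (hh.trans hq.symm)))
  have hr1 : e ∈ (canon u v).edges ∨ e ∈ (canon v u).edges := route_edges he1
  have hr2 : e ∈ (canon u' v').edges ∨ e ∈ (canon v' u').edges := route_edges he2
  rcases hr1 with h1 | h1 <;> rcases hr2 with h2 | h2
  · exact key hm4 hne' h1 h2 hcc
  · refine key hm4 (x0' := v') (y0' := u') ?_ h1 h2 ?_
    · rw [Sym2.eq_swap (a := v') (b := u')]
      exact hne'
    · rw [hcc, colPair_symm]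
  · refine key hm4 (x0 := v) (y0 := u) ?_ h1 h2 ?_
    · rw [Sym2.eq_swap (a := v) (b := u)]
      exact hne'
    · rw [← hcc, colPair_symm]
  · refine key hm4 (x0 := v) (y0 := u) (x0' := v') (y0' := u') ?_ h1 h2 ?_
    · rw [Sym2.eq_swap (a := v) (b := u), Sym2.eq_swap (a := v') (b := u')]
      exact hne'
    · rw [colPair_symm, hcc, colPair_symm]

def vtEquiv (m h : ℕ) : VT m h ≃ Σ i : Fin (h - 1 + 1), List.Vector (Fin m) i where
  toFun a := ⟨⟨a.val.length, Nat.lt_succ_of_le a.2⟩, ⟨a.val, rfl⟩⟩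
  invFun p := ⟨p.2.val, by rw [p.2.2]; exact Nat.le_of_lt_succ p.1.2⟩
  left_inv a := rfl
  right_inv p := by
    rcases p with ⟨⟨i, hi⟩, ⟨l, hl⟩⟩
    have hl' : l.length = i := hl
    subst hl'
    rfl

end OptIdxAux

open OptIdxAux in
theorem opticalIndex_doubleMAryTree_le' (m h : ℕ) (hm4 : 4 ≤ m) (hh : 1 ≤ h) :
    opticalIndex (doubleMAryTree m h) ≤ (∑ i ∈ Finset.range h, m ^ i) ^ 2 := by
  haveI : NeZero m := ⟨by omega⟩
  haveI : Fintype (VT m h) := Fintype.ofEquiv _ (vtEquiv m h).symm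
  have hcard : Fintype.card (VT m h) = ∑ i ∈ Finset.range h, m ^ i := by
    rw [Fintype.card_congr (vtEquiv m h)]
    rw [Fintype.card_sigma]
    have : ∀ i : Fin (h - 1 + 1), Fintype.card (List.Vector (Fin m) i) = m ^ (i : ℕ) := by
      intro i
      rw [card_vector, Fintype.card_fin]
    rw [Finset.sum_congr rfl (fun i _ => this i)]
    rw [Fin.sum_univ_eq_sum_range (fun i => m ^ i) (h - 1 + 1), Nat.sub_add_cancel hh]
  have col : (routing m h).conflictGraph.Coloring (VT m h × VT m h) :=
    SimpleGraph.Coloring.mk colFun (fun hadj => coloring_valid hm4 hadj)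
  have hcolble := col.colorable
  rw [Fintype.card_prod, hcard] at hcolble
  apply Nat.sInf_le
  refine ⟨routing m h, ?_⟩
  rw [pow_two]
  exact hcolble


/-- for every even integer `m ≥ 4` and every integer `h ≥ 1`, the undirected
optical index of the tree `D_{m,h}` (two disjoint copies of the complete `m`-ary tree of
height `h−1` joined by an edge between the two roots) is at most
`(1 + m + m² + … + m^(h−1))²`. -/
theorem opticalIndex_doubleMAryTree_le (m h : ℕ) (hm : Even m) (hm4 : 4 ≤ m) (hh : 1 ≤ h) :
    opticalIndex (doubleMAryTree m h) ≤ (∑ i ∈ Finset.range h, m ^ i) ^ 2 :=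
  opticalIndex_doubleMAryTree_le' m h hm4 hh
end
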